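/- arXiv:1907.03850 — 6 statements merged into one kernel-verified Lean document; each statement's English description precedes it below -/
import Mathlib

section
/- For every finite simple graph H there exist a natural number m, finite simple graphs F₁, …, F_m, and rational numbers λ₁, …, λ_m such that for every finite bipartite simple graph G, the number of homomorphisms from H to the line graph L(G) satisfies |Hom(H, L(G))| = Σ_{i=1}^{m} λᵢ · |Hom(Fᵢ, G)| (an equality of rational numbers). -/
open SimpleGraph Sum


open Classical in
noncomputable def ind (p : Prop) : ℚ := if p then 1 else 0

lemma ind_true {p : Prop} (h : p) : ind p = 1 := by simp [ind, h]
lemma ind_false {p : Prop} (h : ¬ p) : ind p = 0 := by simp [ind, h]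
lemma ind_iff {p q : Prop} (h : p ↔ q) : ind p = ind q := by
  by_cases hp : p
  · rw [ind_true hp, ind_true (h.1 hp)]
  · rw [ind_false hp, ind_false (fun hq => hp (h.2 hq))]
lemma ind_and {p q : Prop} : ind (p ∧ q) = ind p * ind q := by
  by_cases hp : p <;> by_cases hq : q <;>
    simp [ind_true, ind_false, hp, hq, ind_true (And.intro hp hq)] <;> simp [ind]

lemma ind_forall {ι : Type*} [Fintype ι] (q : ι → Prop) :
    ind (∀ i, q i) = ∏ i, ind (q i) := by
  by_cases h : ∀ i, q i
  · rw [ind_true h, Finset.prod_eq_one]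
    intro i _; rw [ind_true (h i)]
  · rw [ind_false h]
    push_neg at h
    obtain ⟨i, hi⟩ := h
    exact (Finset.prod_eq_zero (Finset.mem_univ i) (ind_false hi)).symm

lemma card_subtype_eq_sum {α : Type*} [Fintype α] (p : α → Prop) :
    (Nat.card {x // p x} : ℚ) = ∑ x, ind (p x) := by
  classical
  rw [Nat.card_eq_fintype_card, Fintype.card_subtype, Finset.card_filter]
  push_cast
  refine Finset.sum_congr rfl fun x _ => ?_
  by_cases h : p x <;> simp [h, ind]

lemma fin3_cases (x : Fin 3) : x = 0 ∨ x = 1 ∨ x = 2 := by fin_cases x <;> simp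

def coeff : Fin 3 → ℚ := fun j => if j = 2 then -2 else 1

def Cst {V W : Type} (u v : V) (g : V ⊕ V → W) : Prop :=
  (g (inl u) = g (inl v) ∨ g (inr u) = g (inr v)) ∧
    ¬ (g (inl u) = g (inl v) ∧ g (inr u) = g (inr v))

def Qc {V W : Type} (u v : V) (j : Fin 3) (g : V ⊕ V → W) : Prop :=
  if j = 0 then g (inl u) = g (inl v)
  else if j = 1 then g (inr u) = g (inr v)
  else g (inl u) = g (inl v) ∧ g (inr u) = g (inr v)

lemma ind_Cst {V W : Type} (u v : V) (g : V ⊕ V → W) :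
    ind (Cst u v g) = ∑ j : Fin 3, coeff j * ind (Qc u v j g) := by
  rw [Fin.sum_univ_three]
  by_cases hA : g (inl u) = g (inl v) <;> by_cases hB : g (inr u) = g (inr v) <;>
    · simp only [Cst, Qc, coeff]
      norm_num
      simp only [ind, hA, hB, if_true, if_false, and_true, and_false, true_and, false_and,
        or_true, true_or, or_false, false_or, not_true, not_false_iff]
      norm_num [show (0:Fin 3) ≠ 2 from by decide, show (1:Fin 3) ≠ 2 from by decide,
        show (2:Fin 3) ≠ 0 from by decide, show (2:Fin 3) ≠ 1 from by decide, hA, hB]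



def PP {V W : Type} (H : SimpleGraph V) (G : SimpleGraph W) (g : V ⊕ V → W) : Prop :=
  (∀ v : V, G.Adj (g (inl v)) (g (inr v))) ∧ ∀ u v : V, H.Adj u v → Cst u v g

section Col
variable {V W : Type} {H : SimpleGraph V} {G : SimpleGraph W} (c : G.Coloring (Fin 2))

lemma fin2_resolve {x y : Fin 2} (h : x ≠ y) (hx : x ≠ 0) : y = 0 := by
  fin_cases x <;> fin_cases y <;> simp_all

lemma fin2_eq_one {x : Fin 2} (hx : x ≠ 0) : x = 1 := by
  fin_cases x <;> simp_all

lemma fin2_opp {x y z : Fin 2} (h1 : x ≠ z) (h2 : y ≠ z) : x = y := by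
  fin_cases x <;> fin_cases y <;> fin_cases z <;> simp_all

lemma sym2_mk_swap (q : W × W) : Sym2.mk q.swap.1 q.swap.2 = Sym2.mk q.1 q.2 := by
  cases q; exact (Sym2.eq_swap).symm

lemma exists_ends (e : G.edgeSet) :
    ∃ q : W × W, G.Adj q.1 q.2 ∧ Sym2.mk q.1 q.2 = (e : Sym2 W) ∧ c q.1 = 0 := by
  obtain ⟨e, he⟩ := e
  induction e with
  | _ a b =>
    rw [SimpleGraph.mem_edgeSet] at he
    by_cases h0 : c a = 0
    · exact ⟨(a, b), he, rfl, h0⟩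
    · refine ⟨(b, a), he.symm, Sym2.eq_swap, ?_⟩
      show c b = 0
      exact fin2_resolve (c.valid he) h0

noncomputable def ends (e : G.edgeSet) : W × W := Classical.choose (exists_ends c e)

lemma ends_adj (e : G.edgeSet) : G.Adj (ends c e).1 (ends c e).2 :=
  (Classical.choose_spec (exists_ends c e)).1

lemma ends_mk (e : G.edgeSet) : Sym2.mk (ends c e).1 (ends c e).2 = (e : Sym2 W) :=
  (Classical.choose_spec (exists_ends c e)).2.1

lemma ends_c1 (e : G.edgeSet) : c (ends c e).1 = 0 :=
  (Classical.choose_spec (exists_ends c e)).2.2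

lemma ends_c2 (e : G.edgeSet) : c (ends c e).2 = 1 := by
  have h := c.valid (ends_adj c e)
  exact fin2_eq_one (fun hh => h ((ends_c1 c e).trans hh.symm))

lemma ends_inj {e₁ e₂ : G.edgeSet} (h : ends c e₁ = ends c e₂) : e₁ = e₂ := by
  apply Subtype.ext
  rw [← ends_mk c e₁, ← ends_mk c e₂, h]

lemma mem_iff_ends {e : G.edgeSet} {x : W} :
    x ∈ (e : Sym2 W) ↔ x = (ends c e).1 ∨ x = (ends c e).2 := by
  rw [← ends_mk c e]; exact Sym2.mem_iff

lemma lineAdj_iff {e₁ e₂ : G.edgeSet} :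
    G.lineGraph.Adj e₁ e₂ ↔
      (((ends c e₁).1 = (ends c e₂).1 ∨ (ends c e₁).2 = (ends c e₂).2) ∧
        ends c e₁ ≠ ends c e₂) := by
  rw [lineGraph_adj_iff_exists]
  constructor
  · rintro ⟨hne, x, hx1, hx2⟩
    refine ⟨?_, fun h => hne (ends_inj c h)⟩
    rw [mem_iff_ends c] at hx1 hx2
    rcases hx1 with rfl | rfl <;> rcases hx2 with h | h
    · exact Or.inl h
    · exfalso
      have := (ends_c1 c e₁).symm.trans (h ▸ ends_c2 c e₂)
      simp at this
    · exfalso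
      have := (ends_c2 c e₁).symm.trans (h ▸ ends_c1 c e₂)
      simp at this
    · exact Or.inr h
  · rintro ⟨hor, hne⟩
    refine ⟨fun h => hne (by rw [h]), ?_⟩
    rcases hor with h | h
    · exact ⟨(ends c e₁).1, (mem_iff_ends c).2 (Or.inl rfl), (mem_iff_ends c).2 (Or.inl h)⟩
    · exact ⟨(ends c e₁).2, (mem_iff_ends c).2 (Or.inr rfl), (mem_iff_ends c).2 (Or.inr h)⟩

/-! ### the forward map -/

noncomputable def prPair (h : H →g G.lineGraph) (ε : H.ConnectedComponent → Fin 2) (v : V) :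
    W × W :=
  if ε (H.connectedComponentMk v) = 0 then ends c (h v) else (ends c (h v)).swap

noncomputable def fwd (h : H →g G.lineGraph) (ε : H.ConnectedComponent → Fin 2) :
    V ⊕ V → W :=
  Sum.elim (fun v => (prPair c h ε v).1) (fun v => (prPair c h ε v).2)

lemma prPair_mk (h : H →g G.lineGraph) (ε : H.ConnectedComponent → Fin 2) (v : V) :
    Sym2.mk (prPair c h ε v).1 (prPair c h ε v).2 = (h v : Sym2 W) := by
  unfold prPair
  split
  · exact ends_mk c (h v)
  · rw [sym2_mk_swap]; exact ends_mk c (h v)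

lemma fwd_P (h : H →g G.lineGraph) (ε : H.ConnectedComponent → Fin 2) :
    PP H G (fwd c h ε) := by
  constructor
  · intro v
    show G.Adj (prPair c h ε v).1 (prPair c h ε v).2
    unfold prPair
    split
    · exact ends_adj c (h v)
    · exact (ends_adj c (h v)).symm
  · intro u v hadj
    have hcc := SimpleGraph.ConnectedComponent.connectedComponentMk_eq_of_adj hadj
    have hl := (lineAdj_iff c).1 (h.map_adj hadj)
    show ((prPair c h ε u).1 = (prPair c h ε v).1 ∨ (prPair c h ε u).2 = (prPair c h ε v).2) ∧
      ¬ ((prPair c h ε u).1 = (prPair c h ε v).1 ∧ (prPair c h ε u).2 = (prPair c h ε v).2)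
    by_cases h0 : ε (H.connectedComponentMk u) = 0
    · rw [show prPair c h ε u = ends c (h u) from by rw [prPair, if_pos h0],
        show prPair c h ε v = ends c (h v) from by rw [prPair, ← hcc, if_pos h0]]
      exact ⟨hl.1, fun hh => hl.2 (Prod.ext hh.1 hh.2)⟩
    · rw [show prPair c h ε u = (ends c (h u)).swap from by rw [prPair, if_neg h0],
        show prPair c h ε v = (ends c (h v)).swap from by rw [prPair, ← hcc, if_neg h0]]
      exact ⟨hl.1.symm, fun hh => hl.2 (Prod.swap_injective (Prod.ext hh.1 hh.2))⟩

/-! ### the backward map -/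

variable {g : V ⊕ V → W}

def bwdFun (hg : PP H G g) (v : V) : G.edgeSet :=
  ⟨s(g (inl v), g (inr v)), by rw [SimpleGraph.mem_edgeSet]; exact hg.1 v⟩

lemma bwd_hom_adj (hg : PP H G g) {u v : V} (hadj : H.Adj u v) :
    G.lineGraph.Adj (bwdFun hg u) (bwdFun hg v) := by
  have hC := hg.2 u v hadj
  refine lineGraph_adj_iff_exists.2 ⟨?_, ?_⟩
  · intro hh
    have h2 : s(g (inl u), g (inr u)) = s(g (inl v), g (inr v)) := congrArg Subtype.val hh
    rcases Sym2.eq_iff.1 h2 with ⟨h3, h4⟩ | ⟨h3, h4⟩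
    · exact hC.2 ⟨h3, h4⟩
    · rcases hC.1 with h5 | h5
      · exact (hg.1 v).ne (h5.symm.trans h3)
      · exact (hg.1 v).ne (h4.symm.trans h5)
  · rcases hC.1 with h5 | h5
    · exact ⟨g (inl u), Sym2.mem_mk_left _ _, h5 ▸ Sym2.mem_mk_left _ _⟩
    · exact ⟨g (inr u), Sym2.mem_mk_right _ _, h5 ▸ Sym2.mem_mk_right _ _⟩

def bwdHom (hg : PP H G g) : H →g G.lineGraph :=
  ⟨bwdFun hg, fun hadj => bwd_hom_adj hg hadj⟩

lemma pair_eq_or (hg : PP H G g) (v : V) :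
    (g (inl v), g (inr v)) = ends c (bwdFun hg v) ∨
      (g (inl v), g (inr v)) = (ends c (bwdFun hg v)).swap := by
  have h1 : s(g (inl v), g (inr v)) = Sym2.mk (ends c (bwdFun hg v)).1 (ends c (bwdFun hg v)).2 :=
    (ends_mk c (bwdFun hg v)).symm
  exact (Sym2.mk_eq_mk_iff (p := (g (inl v), g (inr v))) (q := ends c (bwdFun hg v))).1 h1

lemma bit_iff (hg : PP H G g) (v : V) :
    c (g (inl v)) = 0 ↔ (g (inl v), g (inr v)) = ends c (bwdFun hg v) := by
  constructor
  · intro h0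
    rcases pair_eq_or c hg v with h | h
    · exact h
    · exfalso
      have : g (inl v) = (ends c (bwdFun hg v)).2 := congrArg Prod.fst h
      rw [this, ends_c2] at h0
      simp at h0
  · intro h
    have : g (inl v) = (ends c (bwdFun hg v)).1 := congrArg Prod.fst h
    rw [this, ends_c1]

lemma bit_adj_const (hg : PP H G g) {u v : V} (hadj : H.Adj u v) :
    c (g (inl u)) = c (g (inl v)) := by
  rcases (hg.2 u v hadj).1 with h | h
  · rw [h]
  · exact fin2_opp (h ▸ c.valid (hg.1 u)) (c.valid (hg.1 v))

noncomputable def bwdEps (hg : PP H G g) : H.ConnectedComponent → Fin 2 :=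
  ConnectedComponent.lift (fun v => c (g (inl v)))
    (by
      intro v w p hp
      clear hp
      induction p with
      | nil => rfl
      | cons hadj _ ih => exact (bit_adj_const c hg hadj).trans ih)

/-! ### the equivalence -/

noncomputable def bigEquiv :
    ((H →g G.lineGraph) × (H.ConnectedComponent → Fin 2)) ≃ {g : V ⊕ V → W // PP H G g} where
  toFun x := ⟨fwd c x.1 x.2, fwd_P c x.1 x.2⟩
  invFun x := (bwdHom x.2, bwdEps c x.2)
  left_inv := by
    rintro ⟨h, ε⟩
    have hg := fwd_P c h ε
    have hbwd : bwdHom (fwd_P c h ε) = h := by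
      apply DFunLike.ext
      intro v
      apply Subtype.ext
      show s(fwd c h ε (inl v), fwd c h ε (inr v)) = (h v : Sym2 W)
      exact prPair_mk c h ε v
    refine Prod.ext hbwd ?_
    show bwdEps c (fwd_P c h ε) = ε
    funext x
    induction x using SimpleGraph.ConnectedComponent.ind with
    | _ v =>
      show c (fwd c h ε (inl v)) = ε (H.connectedComponentMk v)
      show c (prPair c h ε v).1 = ε (H.connectedComponentMk v)
      unfold prPair
      by_cases h0 : ε (H.connectedComponentMk v) = 0
      · rw [if_pos h0, ends_c1, h0]
      · rw [if_neg h0, show ((ends c (h v)).swap).1 = (ends c (h v)).2 from rfl, ends_c2,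
          (fin2_eq_one h0)]
  right_inv := by
    rintro ⟨g, hg⟩
    apply Subtype.ext
    funext x
    have hmk : ∀ v : V, bwdEps c hg (H.connectedComponentMk v) = c (g (inl v)) := fun v => rfl
    cases x with
    | inl v =>
      show (prPair c (bwdHom hg) (bwdEps c hg) v).1 = g (inl v)
      unfold prPair
      rw [hmk v]
      by_cases h0 : c (g (inl v)) = 0
      · rw [if_pos h0]
        exact (congrArg Prod.fst ((bit_iff c hg v).1 h0)).symm
      · rw [if_neg h0]
        rcases pair_eq_or c hg v with h | h
        · exact absurd ((bit_iff c hg v).2 h) h0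
        · exact (congrArg Prod.fst h).symm
    | inr v =>
      show (prPair c (bwdHom hg) (bwdEps c hg) v).2 = g (inr v)
      unfold prPair
      rw [hmk v]
      by_cases h0 : c (g (inl v)) = 0
      · rw [if_pos h0]
        exact (congrArg Prod.snd ((bit_iff c hg v).1 h0)).symm
      · rw [if_neg h0]
        rcases pair_eq_or c hg v with h | h
        · exact absurd ((bit_iff c hg v).2 h) h0
        · exact (congrArg Prod.snd h).symm

end Col


section QuotPart
variable {V : Type} [Fintype V] {W : Type} (H : SimpleGraph V) (G : SimpleGraph W)

open Classical in
noncomputable def RR : Finset (V × V) := H.edgeSet.toFinite.toFinset.image Quot.out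

lemma RR_adj {p : V × V} (hp : p ∈ RR H) : H.Adj p.1 p.2 := by
  classical
  simp only [RR, Finset.mem_image, Set.Finite.mem_toFinset] at hp
  obtain ⟨e, he, rfl⟩ := hp
  have h2 : Sym2.mk (Quot.out e).1 (Quot.out e).2 = e := Quot.out_eq e
  rw [← H.mem_edgeSet]
  rwa [show s(Prod.fst (Quot.out e), Prod.snd (Quot.out e)) = Sym2.mk (Quot.out e).1 (Quot.out e).2 from rfl, h2]

lemma RR_complete {u v : V} (h : H.Adj u v) :
    ∃ p ∈ RR H, p = (u, v) ∨ p = (v, u) := by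
  classical
  refine ⟨Quot.out s(u,v), ?_, ?_⟩
  · simp only [RR, Finset.mem_image, Set.Finite.mem_toFinset]
    exact ⟨s(u,v), h, rfl⟩
  · have h2 : Sym2.mk (Quot.out s(u,v)).1 (Quot.out s(u,v)).2 = s(u,v) := Quot.out_eq _
    rcases Sym2.eq_iff.1 h2 with ⟨h3, h4⟩ | ⟨h3, h4⟩
    · left; exact Prod.ext h3 h4
    · right; exact Prod.ext h3 h4

def rel (t : {p // p ∈ RR H} → Fin 3) (x y : V ⊕ V) : Prop :=
  ∃ p : {p // p ∈ RR H},
    (t p ≠ 1 ∧ x = inl p.1.1 ∧ y = inl p.1.2) ∨ (t p ≠ 0 ∧ x = inr p.1.1 ∧ y = inr p.1.2)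

variable (t : {p // p ∈ RR H} → Fin 3)

def st3 : Setoid (V ⊕ V) := Relation.EqvGen.setoid (rel H t)

def Qt := Quotient (st3 H t)

noncomputable instance : Fintype (Qt H t) := by
  have : Finite (Qt H t) := Quotient.finite _
  exact Fintype.ofFinite _

def mkQ (x : V ⊕ V) : Qt H t := Quotient.mk (st3 H t) x

def Deg : Prop := ∃ v : V, mkQ H t (inl v) = mkQ H t (inr v)

def Ft : SimpleGraph (Qt H t) where
  Adj a b := a ≠ b ∧ ∃ v : V,
    (a = mkQ H t (inl v) ∧ b = mkQ H t (inr v)) ∨ (b = mkQ H t (inl v) ∧ a = mkQ H t (inr v))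
  symm := by
    constructor
    rintro a b ⟨hne, v, hv⟩
    exact ⟨hne.symm, v, hv.symm⟩
  loopless := by constructor; rintro a ⟨hne, _⟩; exact hne rfl

def PtP (g : V ⊕ V → W) : Prop :=
  (∀ v : V, G.Adj (g (inl v)) (g (inr v))) ∧ ∀ x y, rel H t x y → g x = g y

lemma eqvgen_eq {g : V ⊕ V → W} (hg : ∀ x y, rel H t x y → g x = g y) {x y : V ⊕ V}
    (h : Relation.EqvGen (rel H t) x y) : g x = g y := by
  induction h with
  | rel a b hab => exact hg a b hab
  | refl => rfl
  | symm a b _ ih => exact ih.symm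
  | trans a b c _ _ ih1 ih2 => exact ih1.trans ih2

noncomputable def homEquiv (hnd : ¬ Deg H t) :
    {g : V ⊕ V → W // PtP H G t g} ≃ (Ft H t →g G) where
  toFun x :=
    ⟨Quotient.lift x.1 (fun a b hab => eqvgen_eq H t x.2.2 hab), by
      rintro a b ⟨hne, v, (⟨rfl, rfl⟩ | ⟨rfl, rfl⟩)⟩
      · exact x.2.1 v
      · exact (x.2.1 v).symm⟩
  invFun k :=
    ⟨fun x => k (mkQ H t x), fun v => k.map_adj ⟨fun heq => hnd ⟨v, heq⟩, v, Or.inl ⟨rfl, rfl⟩⟩,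
      fun x y hr => congrArg k (Quotient.sound (Relation.EqvGen.rel x y hr))⟩
  left_inv := by
    rintro ⟨g, hg⟩
    apply Subtype.ext
    funext x
    rfl
  right_inv := by
    intro k
    apply DFunLike.ext
    intro a
    induction a using Quotient.ind with
    | _ x => rfl

lemma deg_empty (hd : Deg H t) : IsEmpty {g : V ⊕ V → W // PtP H G t g} := by
  constructor
  rintro ⟨g, hg⟩
  obtain ⟨v, hv⟩ := hd
  have h1 : Relation.EqvGen (rel H t) (inl v) (inr v) := Quotient.exact hv
  exact (hg.1 v).ne (eqvgen_eq H t hg.2 h1)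

lemma tri_empty (hG : G.Colorable 2) : IsEmpty ((⊤ : SimpleGraph (Fin 3)) →g G) := by
  constructor
  intro k
  have c := hG.some
  obtain ⟨a, b, hab, heq⟩ :=
    Fintype.exists_ne_map_eq_of_card_lt (fun i : Fin 3 => c (k i)) (by simp)
  exact c.valid (k.map_adj (by simpa using hab)) heq

open Classical in
noncomputable def FD : Σ n : ℕ, SimpleGraph (Fin n) :=
  if Deg H t then ⟨3, ⊤⟩
  else ⟨Nat.card (Qt H t), (Ft H t).comap ⇑(Finite.equivFin (Qt H t)).symm⟩

noncomputable def homEquivComap {α γ : Type} (e : α ≃ Fin (Nat.card α)) (F : SimpleGraph α)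
    (G : SimpleGraph γ) : (F →g G) ≃ ((F.comap ⇑e.symm) →g G) where
  toFun k := ⟨fun i => k (e.symm i), fun {a b} hab => k.map_adj hab⟩
  invFun k := ⟨fun a => k (e a), fun {a b} hab => k.map_adj (by
    show F.Adj (e.symm (e a)) (e.symm (e b))
    simpa using hab)⟩
  left_inv k := by
    apply DFunLike.ext; intro a
    show k (e.symm (e a)) = k a
    simp
  right_inv k := by
    apply DFunLike.ext; intro i
    show k (e (e.symm i)) = k i
    simp

lemma card_Pt (hG : G.Colorable 2) :
    Nat.card {g : V ⊕ V → W // PtP H G t g} = Nat.card ((FD H t).2 →g G) := by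
  by_cases hd : Deg H t
  · have h1 : Nat.card {g : V ⊕ V → W // PtP H G t g} = 0 :=
      @Nat.card_of_isEmpty _ (deg_empty H G t hd)
    rw [h1]
    rw [show FD H t = ⟨3, ⊤⟩ from by rw [FD, if_pos hd]]
    exact (@Nat.card_of_isEmpty _ (tri_empty G hG)).symm
  · rw [show FD H t = ⟨Nat.card (Qt H t), (Ft H t).comap ⇑(Finite.equivFin (Qt H t)).symm⟩ from
      by rw [FD, if_neg hd]]
    exact Nat.card_congr ((homEquiv H G t hd).trans (homEquivComap _ (Ft H t) G))

end QuotPart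

section Main
variable {V : Type} [Fintype V] {W : Type} {H : SimpleGraph V} {G : SimpleGraph W}

lemma Cst_symm {u v : V} {g : V ⊕ V → W} (h : Cst u v g) : Cst v u g :=
  ⟨h.1.imp Eq.symm Eq.symm, fun ⟨a, b⟩ => h.2 ⟨a.symm, b.symm⟩⟩

lemma PP_iff (g : V ⊕ V → W) :
    PP H G g ↔ ((∀ v : V, G.Adj (g (inl v)) (g (inr v))) ∧
      ∀ p : {p // p ∈ RR H}, Cst p.1.1 p.1.2 g) := by
  constructor
  · rintro ⟨h1, h2⟩
    exact ⟨h1, fun p => h2 _ _ (RR_adj H p.2)⟩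
  · rintro ⟨h1, h2⟩
    refine ⟨h1, fun u v hadj => ?_⟩
    obtain ⟨p, hp, hc⟩ := RR_complete H hadj
    have hcst := h2 ⟨p, hp⟩
    rcases hc with h | h
    · subst h; exact hcst
    · subst h; exact Cst_symm hcst

lemma Qc_zero {u v : V} {g : V ⊕ V → W} : Qc u v 0 g ↔ g (inl u) = g (inl v) := by
  simp [Qc]

lemma Qc_one {u v : V} {g : V ⊕ V → W} : Qc u v 1 g ↔ g (inr u) = g (inr v) := by
  norm_num [Qc, show (1 : Fin 3) ≠ 0 from by decide]

lemma Qc_two {u v : V} {g : V ⊕ V → W} :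
    Qc u v 2 g ↔ (g (inl u) = g (inl v) ∧ g (inr u) = g (inr v)) := by
  norm_num [Qc, show (2 : Fin 3) ≠ 0 from by decide, show (2 : Fin 3) ≠ 1 from by decide]

lemma Qc_iff_rel (t : {p // p ∈ RR H} → Fin 3) (g : V ⊕ V → W) :
    (∀ p : {p // p ∈ RR H}, Qc p.1.1 p.1.2 (t p) g) ↔
      (∀ x y, rel H t x y → g x = g y) := by
  constructor
  · rintro hp x y ⟨p, hc⟩
    have hq := hp p
    rcases hc with ⟨hne, rfl, rfl⟩ | ⟨hne, rfl, rfl⟩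
    · rcases fin3_cases (t p) with h | h | h
      · rw [h, Qc_zero] at hq; exact hq
      · exact absurd h hne
      · rw [h, Qc_two] at hq; exact hq.1
    · rcases fin3_cases (t p) with h | h | h
      · exact absurd h hne
      · rw [h, Qc_one] at hq; exact hq
      · rw [h, Qc_two] at hq; exact hq.2
  · intro hr p
    rcases fin3_cases (t p) with h | h | h
    · rw [h, Qc_zero]
      exact hr _ _ ⟨p, Or.inl ⟨by rw [h]; decide, rfl, rfl⟩⟩
    · rw [h, Qc_one]
      exact hr _ _ ⟨p, Or.inr ⟨by rw [h]; decide, rfl, rfl⟩⟩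
    · rw [h, Qc_two]
      exact ⟨hr _ _ ⟨p, Or.inl ⟨by rw [h]; decide, rfl, rfl⟩⟩,
        hr _ _ ⟨p, Or.inr ⟨by rw [h]; decide, rfl, rfl⟩⟩⟩

end Main

/-- For every finite simple graph `H` there exist finitely many finite simple graphs
`F₁, …, F_m` and rationals `λ₁, …, λ_m` such that for every finite bipartite graph `G`,
`|Hom(H, L(G))| = Σᵢ λᵢ · |Hom(Fᵢ, G)|`. -/
theorem stmt3 {V : Type} [Fintype V] (H : SimpleGraph V) :
    ∃ (m : ℕ) (n : Fin m → ℕ) (F : ∀ i : Fin m, SimpleGraph (Fin (n i))) (lam : Fin m → ℚ),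
      ∀ (W : Type) [Fintype W] (G : SimpleGraph W), G.Colorable 2 →
        (Nat.card (H →g G.lineGraph) : ℚ) = ∑ i, lam i * (Nat.card (F i →g G) : ℚ) := by
  classical
  set K : ℕ := Nat.card (H.ConnectedComponent → Fin 2) with hKdef
  set m : ℕ := Fintype.card (({p // p ∈ RR H} → Fin 3)) with hmdef
  set ee : ({p // p ∈ RR H} → Fin 3) ≃ Fin m := Fintype.equivFin _ with heedef
  refine ⟨m, fun i => (FD H (ee.symm i)).1, fun i => (FD H (ee.symm i)).2,
    fun i => (∏ p, coeff (ee.symm i p)) / K, ?_⟩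
  intro W _ G hG
  have c : G.Coloring (Fin 2) := hG.some
  have hKpos : 0 < K := by
    have : Nonempty (H.ConnectedComponent → Fin 2) := ⟨fun _ => 0⟩
    exact Nat.card_pos
  have hK : (K : ℚ) ≠ 0 := by positivity
  -- Step 1 : line-graph homs vs pair systems
  have h1 : Nat.card {g : V ⊕ V → W // PP H G g} = Nat.card (H →g G.lineGraph) * K := by
    rw [← Nat.card_prod]
    exact Nat.card_congr (bigEquiv c).symm
  -- Step 2 : inclusion-exclusion expansion
  have h2 : (Nat.card {g : V ⊕ V → W // PP H G g} : ℚ) =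
      ∑ t : {p // p ∈ RR H} → Fin 3,
        (∏ p, coeff (t p)) * (Nat.card {g : V ⊕ V → W // PtP H G t g} : ℚ) := by
    rw [card_subtype_eq_sum]
    have hg1 : ∀ g : V ⊕ V → W, ind (PP H G g) =
        ∑ t : {p // p ∈ RR H} → Fin 3, (∏ p, coeff (t p)) * ind (PtP H G t g) := by
      intro g
      have e0 : ind (PP H G g) = ind (∀ v : V, G.Adj (g (inl v)) (g (inr v))) *
          ∏ p : {p // p ∈ RR H}, ind (Cst p.1.1 p.1.2 g) := by
        rw [ind_iff (PP_iff g), ind_and, ind_forall, ind_forall]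
      rw [e0]
      have e1 : ∏ p : {p // p ∈ RR H}, ind (Cst p.1.1 p.1.2 g) =
          ∑ t : {p // p ∈ RR H} → Fin 3, ∏ p, coeff (t p) * ind (Qc p.1.1 p.1.2 (t p) g) := by
        rw [show (fun p : {p // p ∈ RR H} => ind (Cst p.1.1 p.1.2 g)) =
            fun p => ∑ j : Fin 3, coeff j * ind (Qc p.1.1 p.1.2 j g) from
          funext fun p => ind_Cst p.1.1 p.1.2 g]
        rw [show (∑ t : {p // p ∈ RR H} → Fin 3,
              ∏ p, coeff (t p) * ind (Qc p.1.1 p.1.2 (t p) g)) =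
            ∑ t ∈ Fintype.piFinset (fun _ : {p // p ∈ RR H} => (Finset.univ : Finset (Fin 3))),
              ∏ p, coeff (t p) * ind (Qc p.1.1 p.1.2 (t p) g) from by
          rw [Fintype.piFinset_univ]]
        exact Finset.prod_univ_sum _ _
      rw [e1, Finset.mul_sum]
      refine Finset.sum_congr rfl fun t _ => ?_
      rw [Finset.prod_mul_distrib, ← ind_forall, ind_iff (Qc_iff_rel t g)]
      have hpt : ind (PtP H G t g) = ind (∀ v : V, G.Adj (g (inl v)) (g (inr v))) *
          ind (∀ x y, rel H t x y → g x = g y) := by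
        rw [← ind_and]
        exact ind_iff Iff.rfl
      rw [hpt]
      ring
    rw [Finset.sum_congr rfl fun g _ => hg1 g, Finset.sum_comm]
    refine Finset.sum_congr rfl fun t _ => ?_
    rw [← Finset.mul_sum, ← card_subtype_eq_sum]
  -- Step 3 : per-pattern counts are hom counts
  have h3 : ∀ t : {p // p ∈ RR H} → Fin 3,
      Nat.card {g : V ⊕ V → W // PtP H G t g} = Nat.card ((FD H t).2 →g G) :=
    fun t => card_Pt H G t hG
  -- Final computation
  have h4 : ∑ i : Fin m, ((∏ p, coeff (ee.symm i p)) / K) *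
        (Nat.card ((FD H (ee.symm i)).2 →g G) : ℚ) =
      (∑ t : {p // p ∈ RR H} → Fin 3,
        (∏ p, coeff (t p)) * (Nat.card ((FD H t).2 →g G) : ℚ)) / K := by
    rw [← Equiv.sum_comp ee.symm
      (fun t => (∏ p, coeff (t p)) * (Nat.card ((FD H t).2 →g G) : ℚ)), Finset.sum_div]
    exact Finset.sum_congr rfl fun i _ => div_mul_eq_mul_div _ _ _
  rw [h4]
  rw [show (∑ t : {p // p ∈ RR H} → Fin 3,
        (∏ p, coeff (t p)) * (Nat.card ((FD H t).2 →g G) : ℚ)) =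
      ∑ t : {p // p ∈ RR H} → Fin 3,
        (∏ p, coeff (t p)) * (Nat.card {g : V ⊕ V → W // PtP H G t g} : ℚ) from
    Finset.sum_congr rfl fun t _ => by rw [h3 t]]
  rw [← h2]
  rw [show ((Nat.card {g : V ⊕ V → W // PP H G g} : ℚ)) =
      (Nat.card (H →g G.lineGraph) : ℚ) * K from by exact_mod_cast congrArg Nat.cast h1]
  rw [mul_div_assoc, div_self hK, mul_one]
end

section
/- Let F and G be finite bipartite simple graphs, and suppose F has no isolated vertices. Then the number of subsets S of the vertex set of the line graph L(G) (equivalently, subsets of the edge set of G) such that the induced subgraph of L(G) on S is isomorphic to L(F) is equal to the number of subgraphs of G isomorphic to F (equivalently, since F has no isolated vertices, to the number of subsets T of the edge set of G such that the graph whose vertex set consists of all endpoints of edges in T and whose edge set is T is isomorphic to F). -/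
open SimpleGraph

namespace WhitneyAux

variable {α β : Type*} {G₁ : SimpleGraph α} {G₂ : SimpleGraph β}

/-- `v` is incident to at least two distinct edges. -/
def TwoE (G : SimpleGraph α) (v : α) : Prop :=
  ∃ e f : G.edgeSet, v ∈ (e : Sym2 α) ∧ v ∈ (f : Sym2 α) ∧ e ≠ f

lemma common_unique {G : SimpleGraph α} {e f : G.edgeSet} (hef : e ≠ f) {x y : α}
    (hxe : x ∈ (e : Sym2 α)) (hxf : x ∈ (f : Sym2 α))
    (hye : y ∈ (e : Sym2 α)) (hyf : y ∈ (f : Sym2 α)) : x = y := by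
  by_contra hxy
  exact hef (Subtype.ext (Sym2.eq_of_ne_mem hxy hxe hye hxf hyf))

lemma line_adj {G : SimpleGraph α} {e f : G.edgeSet} (hef : e ≠ f) {x : α}
    (hxe : x ∈ (e : Sym2 α)) (hxf : x ∈ (f : Sym2 α)) : G.lineGraph.Adj e f :=
  lineGraph_adj_iff_exists.mpr ⟨hef, x, hxe, hxf⟩

lemma line_adj_elim {G : SimpleGraph α} {e f : G.edgeSet} (h : G.lineGraph.Adj e f) :
    e ≠ f ∧ ∃ x, x ∈ (e : Sym2 α) ∧ x ∈ (f : Sym2 α) := lineGraph_adj_iff_exists.mp h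

lemma adj_of_mem {G : SimpleGraph α} {e : G.edgeSet} {x y : α} (hxy : x ≠ y)
    (hx : x ∈ (e : Sym2 α)) (hy : y ∈ (e : Sym2 α)) : G.Adj x y := by
  have : (e : Sym2 α) = s(x, y) := (Sym2.mem_and_mem_iff hxy).mp ⟨hx, hy⟩
  have he := e.2
  rw [this] at he
  exact G.mem_edgeSet.mp he

/-- Helly property for edges of a triangle-free graph. -/
lemma helly {G : SimpleGraph β} (t : G.CliqueFree 3) {a b c : G.edgeSet}
    {x y z : β} (hxa : x ∈ (a : Sym2 β)) (hxb : x ∈ (b : Sym2 β))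
    (hyb : y ∈ (b : Sym2 β)) (hyc : y ∈ (c : Sym2 β))
    (hza : z ∈ (a : Sym2 β)) (hzc : z ∈ (c : Sym2 β)) :
    ∃ w, w ∈ (a : Sym2 β) ∧ w ∈ (b : Sym2 β) ∧ w ∈ (c : Sym2 β) := by
  by_cases hxy : x = y
  · exact ⟨x, hxa, hxb, hxy ▸ hyc⟩
  by_cases hxz : x = z
  · exact ⟨x, hxa, hxb, hxz ▸ hzc⟩
  by_cases hyz : y = z
  · exact ⟨y, hyz ▸ hza, hyb, hyc⟩
  · exfalso
    classical
    have h1 : G.Adj x z := adj_of_mem hxz hxa hza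
    have h2 : G.Adj x y := adj_of_mem hxy hxb hyb
    have h3 : G.Adj y z := adj_of_mem hyz hyc hzc
    exact t {x, y, z} (is3Clique_triple_iff.mpr ⟨h2, h1, h3⟩)

/-- The defining property of the image vertex. -/
def Pmap (φ : G₁.lineGraph ≃g G₂.lineGraph) (v : α) (w : β) : Prop :=
  ∀ e : G₁.edgeSet, v ∈ (e : Sym2 α) → w ∈ ((φ e : G₂.edgeSet) : Sym2 β)

lemma existsUnique_P (t₂ : G₂.CliqueFree 3) (φ : G₁.lineGraph ≃g G₂.lineGraph)
    {v : α} (hv : TwoE G₁ v) : ∃! w, Pmap φ v w := by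
  obtain ⟨e, f, he, hf, hef⟩ := id hv
  have hadj : G₂.lineGraph.Adj (φ e) (φ f) := φ.map_rel_iff.mpr (line_adj hef he hf)
  obtain ⟨hne, x, hxe, hxf⟩ := line_adj_elim hadj
  refine ⟨x, ?_, ?_⟩
  · intro g hg
    by_cases hge : g = e
    · exact hge ▸ hxe
    by_cases hgf : g = f
    · exact hgf ▸ hxf
    have hadj1 : G₂.lineGraph.Adj (φ e) (φ g) :=
      φ.map_rel_iff.mpr (line_adj (fun h => hge (h.symm)) he hg)
    have hadj2 : G₂.lineGraph.Adj (φ f) (φ g) :=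
      φ.map_rel_iff.mpr (line_adj (fun h => hgf (h.symm)) hf hg)
    obtain ⟨hne1, y, hyf, hyg⟩ := line_adj_elim hadj2
    obtain ⟨hne2, z, hze, hzg⟩ := line_adj_elim hadj1
    obtain ⟨w, hwe, hwf, hwg⟩ := helly t₂ hxe hxf hyf hyg hze hzg
    exact common_unique hne hwe hwf hxe hxf ▸ hwg
  · intro w hw
    exact common_unique hne (hw e he) (hw f hf) hxe hxf

noncomputable def psi2 (t₂ : G₂.CliqueFree 3) (φ : G₁.lineGraph ≃g G₂.lineGraph)
    {v : α} (hv : TwoE G₁ v) : β :=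
  (existsUnique_P t₂ φ hv).exists.choose

lemma psi2_P (t₂ : G₂.CliqueFree 3) (φ : G₁.lineGraph ≃g G₂.lineGraph)
    {v : α} (hv : TwoE G₁ v) : Pmap φ v (psi2 t₂ φ hv) :=
  (existsUnique_P t₂ φ hv).exists.choose_spec

lemma P_eq_psi2 (t₂ : G₂.CliqueFree 3) (φ : G₁.lineGraph ≃g G₂.lineGraph)
    {v : α} (hv : TwoE G₁ v) {w : β} (hw : Pmap φ v w) : w = psi2 t₂ φ hv :=
  (existsUnique_P t₂ φ hv).unique hw (psi2_P t₂ φ hv)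

lemma twoE_psi2 (t₂ : G₂.CliqueFree 3) (φ : G₁.lineGraph ≃g G₂.lineGraph)
    {v : α} (hv : TwoE G₁ v) : TwoE G₂ (psi2 t₂ φ hv) := by
  obtain ⟨e, f, he, hf, hef⟩ := id hv
  exact ⟨φ e, φ f, psi2_P t₂ φ hv e he, psi2_P t₂ φ hv f hf, fun h => hef (φ.injective h)⟩

/-- The key "star image" lemma, requiring triangle-freeness of `G₁`. -/
lemma P_symm (t₁ : G₁.CliqueFree 3) (t₂ : G₂.CliqueFree 3)
    (φ : G₁.lineGraph ≃g G₂.lineGraph) {v : α} (hv : TwoE G₁ v) :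
    Pmap φ.symm (psi2 t₂ φ hv) v := by
  intro f hf
  obtain ⟨e, g, he, hg, heg⟩ := id hv
  by_cases hfe : f = φ e
  · rw [hfe, φ.symm_apply_apply]; exact he
  by_cases hfg : f = φ g
  · rw [hfg, φ.symm_apply_apply]; exact hg
  by_cases hvf : v ∈ ((φ.symm f : G₁.edgeSet) : Sym2 α)
  · exact hvf
  exfalso
  have hadj1 : G₂.lineGraph.Adj f (φ e) := line_adj hfe hf (psi2_P t₂ φ hv e he)
  have hadj2 : G₂.lineGraph.Adj f (φ g) := line_adj hfg hf (psi2_P t₂ φ hv g hg)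
  have adj1 : G₁.lineGraph.Adj (φ.symm f) (φ.symm (φ e)) := φ.symm.map_rel_iff.mpr hadj1
  have adj2 : G₁.lineGraph.Adj (φ.symm f) (φ.symm (φ g)) := φ.symm.map_rel_iff.mpr hadj2
  rw [φ.symm_apply_apply] at adj1 adj2
  obtain ⟨hne1, x, hxf, hxe⟩ := line_adj_elim adj1
  obtain ⟨hne2, y, hyf, hyg⟩ := line_adj_elim adj2
  have hxv : x ≠ v := fun h => hvf (h ▸ hxf)
  have hyv : y ≠ v := fun h => hvf (h ▸ hyf)
  have hxy : x ≠ y := by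
    intro h
    exact hxv (common_unique heg hxe (h ▸ hyg) he hg)
  have a1 : G₁.Adj v x := adj_of_mem (Ne.symm hxv) he hxe
  have a2 : G₁.Adj v y := adj_of_mem (Ne.symm hyv) hg hyg
  have a3 : G₁.Adj x y := adj_of_mem hxy hxf hyf
  classical
  exact t₁ {v, x, y} (is3Clique_triple_iff.mpr ⟨a1, a2, a3⟩)

lemma psi2_symm (t₁ : G₁.CliqueFree 3) (t₂ : G₂.CliqueFree 3)
    (φ : G₁.lineGraph ≃g G₂.lineGraph) {v : α} (hv : TwoE G₁ v) :
    psi2 t₁ φ.symm (twoE_psi2 t₂ φ hv) = v :=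
  (P_eq_psi2 t₁ φ.symm (twoE_psi2 t₂ φ hv) (P_symm t₁ t₂ φ hv)).symm

lemma psi2_inj (t₁ : G₁.CliqueFree 3) (t₂ : G₂.CliqueFree 3)
    (φ : G₁.lineGraph ≃g G₂.lineGraph) {v v' : α} (hv : TwoE G₁ v) (hv' : TwoE G₁ v')
    (h : psi2 t₂ φ hv = psi2 t₂ φ hv') : v = v' := by
  have h1 := P_symm t₁ t₂ φ hv
  rw [h] at h1
  exact (existsUnique_P t₁ φ.symm (twoE_psi2 t₂ φ hv')).unique h1 (P_symm t₁ t₂ φ hv')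

section Psi

variable (h₁ : ∀ v : α, ∃ u, G₁.Adj v u)

/-- A chosen neighbour. -/
noncomputable def nb (v : α) : α := (h₁ v).choose

lemma nb_adj (v : α) : G₁.Adj v (nb h₁ v) := (h₁ v).choose_spec

/-- A chosen edge at `v`. -/
noncomputable def edgeAt (v : α) : G₁.edgeSet := ⟨s(v, nb h₁ v), nb_adj h₁ v⟩

lemma mem_edgeAt (v : α) : v ∈ ((edgeAt h₁ v : G₁.edgeSet) : Sym2 α) := Sym2.mem_mk_left _ _

lemma nb_mem_edgeAt (v : α) : nb h₁ v ∈ ((edgeAt h₁ v : G₁.edgeSet) : Sym2 α) :=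
  Sym2.mem_mk_right _ _

lemma nb_ne (v : α) : nb h₁ v ≠ v := (nb_adj h₁ v).ne'

lemma notTwoE_unique {v : α} (hv : ¬TwoE G₁ v) {e : G₁.edgeSet}
    (he : v ∈ (e : Sym2 α)) : e = edgeAt h₁ v := by
  by_contra hne
  exact hv ⟨e, edgeAt h₁ v, he, mem_edgeAt h₁ v, hne⟩

open Classical in
/-- The vertex map induced by a line-graph isomorphism. -/
noncomputable def psi (t₂ : G₂.CliqueFree 3) (φ : G₁.lineGraph ≃g G₂.lineGraph) (v : α) : β :=
  if hv : TwoE G₁ v then psi2 t₂ φ hv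
  else if hu : TwoE G₁ (nb h₁ v) then
    Sym2.Mem.other (psi2_P t₂ φ hu (edgeAt h₁ v) (nb_mem_edgeAt h₁ v))
  else if v = (Quot.out ((edgeAt h₁ v : G₁.edgeSet) : Sym2 α)).1
    then (Quot.out ((φ (edgeAt h₁ v) : G₂.edgeSet) : Sym2 β)).1
    else (Quot.out ((φ (edgeAt h₁ v) : G₂.edgeSet) : Sym2 β)).2


lemma edgeAt_coe (v : α) : ((edgeAt h₁ v : G₁.edgeSet) : Sym2 α) = s(v, nb h₁ v) := rfl

lemma psi_of_twoE (t₂ : G₂.CliqueFree 3) (φ : G₁.lineGraph ≃g G₂.lineGraph)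
    {v : α} (hv : TwoE G₁ v) : psi h₁ t₂ φ v = psi2 t₂ φ hv := dif_pos hv

lemma psi_of_pend (t₂ : G₂.CliqueFree 3) (φ : G₁.lineGraph ≃g G₂.lineGraph)
    {v : α} (hv : ¬TwoE G₁ v) (hu : TwoE G₁ (nb h₁ v)) :
    psi h₁ t₂ φ v = Sym2.Mem.other (psi2_P t₂ φ hu (edgeAt h₁ v) (nb_mem_edgeAt h₁ v)) := by
  unfold psi
  rw [dif_neg hv, dif_pos hu]

open Classical in
lemma psi_of_iso (t₂ : G₂.CliqueFree 3) (φ : G₁.lineGraph ≃g G₂.lineGraph)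
    {v : α} (hv : ¬TwoE G₁ v) (hu : ¬TwoE G₁ (nb h₁ v)) :
    psi h₁ t₂ φ v = (if v = (Quot.out ((edgeAt h₁ v : G₁.edgeSet) : Sym2 α)).1
      then (Quot.out ((φ (edgeAt h₁ v) : G₂.edgeSet) : Sym2 β)).1
      else (Quot.out ((φ (edgeAt h₁ v) : G₂.edgeSet) : Sym2 β)).2) := by
  unfold psi
  rw [dif_neg hv, dif_neg hu]

include h₁ in
/-- If `y` has two edges but the corresponding vertex downstairs has at most one, contradiction. -/
lemma no_two_aux (φ : G₁.lineGraph ≃g G₂.lineGraph) {y : β} (hx : TwoE G₂ y) {p : α}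
    (hp : Pmap φ.symm y p) (hnp : ¬TwoE G₁ p) : False := by
  obtain ⟨f, g, hfy, hgy, hfg⟩ := id hx
  have ha : φ.symm f = edgeAt h₁ p := notTwoE_unique h₁ hnp (hp f hfy)
  have hb : φ.symm g = edgeAt h₁ p := notTwoE_unique h₁ hnp (hp g hgy)
  exact hfg (φ.symm.injective (ha.trans hb.symm))

lemma pend_notTwoE (t₁ : G₁.CliqueFree 3) (t₂ : G₂.CliqueFree 3)
    (φ : G₁.lineGraph ≃g G₂.lineGraph) {v : α} (hv : ¬TwoE G₁ v) (hu : TwoE G₁ (nb h₁ v)) :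
    ¬TwoE G₂ (Sym2.Mem.other (psi2_P t₂ φ hu (edgeAt h₁ v) (nb_mem_edgeAt h₁ v))) := by
  intro hx
  have hsp := Sym2.other_spec (psi2_P t₂ φ hu (edgeAt h₁ v) (nb_mem_edgeAt h₁ v))
  have hxmem : Sym2.Mem.other (psi2_P t₂ φ hu (edgeAt h₁ v) (nb_mem_edgeAt h₁ v)) ∈
      ((φ (edgeAt h₁ v) : G₂.edgeSet) : Sym2 β) :=
    Sym2.other_mem _
  have hxw : Sym2.Mem.other (psi2_P t₂ φ hu (edgeAt h₁ v) (nb_mem_edgeAt h₁ v)) ≠ psi2 t₂ φ hu :=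
    Sym2.other_ne (G₂.not_isDiag_of_mem_edgeSet (φ (edgeAt h₁ v)).2) _
  have hpv : psi2 t₁ φ.symm hx ∈ ((edgeAt h₁ v : G₁.edgeSet) : Sym2 α) := by
    have h0 := psi2_P t₁ φ.symm hx (φ (edgeAt h₁ v)) hxmem
    rwa [φ.symm_apply_apply] at h0
  rw [edgeAt_coe] at hpv
  rcases Sym2.mem_iff.mp hpv with h | h
  · exact no_two_aux h₁ φ hx (psi2_P t₁ φ.symm hx) (by rwa [h])
  · have hP : Pmap φ.symm.symm (psi2 t₁ φ.symm hx) _ := P_symm t₂ t₁ φ.symm hx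
    rw [h] at hP
    exact hxw (P_eq_psi2 t₂ φ hu hP)

lemma iso_notTwoE (t₁ : G₁.CliqueFree 3)
    (φ : G₁.lineGraph ≃g G₂.lineGraph) {v : α} (hv : ¬TwoE G₁ v) (hu : ¬TwoE G₁ (nb h₁ v))
    {y : β} (hy : y ∈ ((φ (edgeAt h₁ v) : G₂.edgeSet) : Sym2 β)) : ¬TwoE G₂ y := by
  intro hx
  have hpv : psi2 t₁ φ.symm hx ∈ ((edgeAt h₁ v : G₁.edgeSet) : Sym2 α) := by
    have h0 := psi2_P t₁ φ.symm hx (φ (edgeAt h₁ v)) hy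
    rwa [φ.symm_apply_apply] at h0
  rw [edgeAt_coe] at hpv
  rcases Sym2.mem_iff.mp hpv with h | h
  · exact no_two_aux h₁ φ hx (psi2_P t₁ φ.symm hx) (by rwa [h])
  · exact no_two_aux h₁ φ hx (psi2_P t₁ φ.symm hx) (by rwa [h])

lemma psi2_congr (t₂ : G₂.CliqueFree 3) (φ : G₁.lineGraph ≃g G₂.lineGraph)
    {v v' : α} (h : v = v') (hv : TwoE G₁ v) (hv' : TwoE G₁ v') :
    psi2 t₂ φ hv = psi2 t₂ φ hv' := by subst h; rfl

lemma out_spec (z : Sym2 α) : s((Quot.out z).1, (Quot.out z).2) = z := Quot.out_eq z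

lemma out_ne {G : SimpleGraph β} (e : G.edgeSet) :
    (Quot.out (e : Sym2 β)).1 ≠ (Quot.out (e : Sym2 β)).2 := by
  intro h
  apply G.not_isDiag_of_mem_edgeSet e.2
  rw [← out_spec ((e : G.edgeSet) : Sym2 β)]
  exact Sym2.mk_isDiag_iff.mpr h

lemma out_fst_mem (z : Sym2 α) : (Quot.out z).1 ∈ z := by
  have h := Sym2.mem_mk_left (Quot.out z).1 (Quot.out z).2
  rwa [out_spec z] at h

lemma out_snd_mem (z : Sym2 α) : (Quot.out z).2 ∈ z := by
  have h := Sym2.mem_mk_right (Quot.out z).1 (Quot.out z).2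
  rwa [out_spec z] at h

lemma mem_out {z : Sym2 α} {x : α} (hx : x ∈ z) :
    x = (Quot.out z).1 ∨ x = (Quot.out z).2 := by
  have h := out_spec z
  rw [← h] at hx
  exact Sym2.mem_iff.mp hx


theorem psi_leftInv (h₂ : ∀ v : β, ∃ u, G₂.Adj v u) (t₁ : G₁.CliqueFree 3)
    (t₂ : G₂.CliqueFree 3) (φ : G₁.lineGraph ≃g G₂.lineGraph) (v : α) :
    psi h₂ t₁ φ.symm (psi h₁ t₂ φ v) = v := by
  by_cases hv : TwoE G₁ v
  · rw [psi_of_twoE h₁ t₂ φ hv, psi_of_twoE h₂ t₁ φ.symm (twoE_psi2 t₂ φ hv)]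
    exact psi2_symm t₁ t₂ φ hv
  by_cases hu : TwoE G₁ (nb h₁ v)
  · -- pendant case
    have hsp := Sym2.other_spec (psi2_P t₂ φ hu (edgeAt h₁ v) (nb_mem_edgeAt h₁ v))
    have hXmem := Sym2.other_mem (psi2_P t₂ φ hu (edgeAt h₁ v) (nb_mem_edgeAt h₁ v))
    have hX2 := pend_notTwoE h₁ t₁ t₂ φ hv hu
    rw [psi_of_pend h₁ t₂ φ hv hu]
    set X := Sym2.Mem.other (psi2_P t₂ φ hu (edgeAt h₁ v) (nb_mem_edgeAt h₁ v)) with hXdef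
    have hXe : edgeAt h₂ X = φ (edgeAt h₁ v) := (notTwoE_unique h₂ hX2 hXmem).symm
    have hnbX : nb h₂ X = psi2 t₂ φ hu := by
      have hm := nb_mem_edgeAt h₂ X
      rw [hXe, ← hsp] at hm
      rcases Sym2.mem_iff.mp hm with h | h
      · exact h
      · exact absurd h (nb_ne h₂ X)
    have hu2 : TwoE G₂ (nb h₂ X) := by rw [hnbX]; exact twoE_psi2 t₂ φ hu
    rw [psi_of_pend h₂ t₁ φ.symm hX2 hu2]
    have hq : psi2 t₁ φ.symm hu2 = nb h₁ v := by
      have hP : Pmap φ.symm (nb h₂ X) (nb h₁ v) := by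
        rw [hnbX]
        exact P_symm t₁ t₂ φ hu
      exact (P_eq_psi2 t₁ φ.symm hu2 hP).symm
    have hsp2 := Sym2.other_spec (psi2_P t₁ φ.symm hu2 (edgeAt h₂ X) (nb_mem_edgeAt h₂ X))
    set R := Sym2.Mem.other (psi2_P t₁ φ.symm hu2 (edgeAt h₂ X) (nb_mem_edgeAt h₂ X)) with hRdef
    rw [hq, hXe, φ.symm_apply_apply, edgeAt_coe h₁] at hsp2
    rcases Sym2.eq_iff.mp hsp2 with ⟨ha, hb⟩ | ⟨ha, hb⟩
    · exact absurd ha (nb_ne h₁ v)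
    · exact hb
  · -- isolated edge case
    rw [psi_of_iso h₁ t₂ φ hv hu]
    have houte := out_spec ((edgeAt h₁ v : G₁.edgeSet) : Sym2 α)
    have houtq := out_spec (((φ (edgeAt h₁ v)) : G₂.edgeSet) : Sym2 β)
    have hq1 : (Quot.out (((φ (edgeAt h₁ v)) : G₂.edgeSet) : Sym2 β)).1 ∈
        (((φ (edgeAt h₁ v)) : G₂.edgeSet) : Sym2 β) := out_fst_mem _
    have hq2 : (Quot.out (((φ (edgeAt h₁ v)) : G₂.edgeSet) : Sym2 β)).2 ∈
        (((φ (edgeAt h₁ v)) : G₂.edgeSet) : Sym2 β) := out_snd_mem _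
    have hn1 : ¬TwoE G₂ (Quot.out (((φ (edgeAt h₁ v)) : G₂.edgeSet) : Sym2 β)).1 :=
      iso_notTwoE h₁ t₁ φ hv hu hq1
    have hn2 : ¬TwoE G₂ (Quot.out (((φ (edgeAt h₁ v)) : G₂.edgeSet) : Sym2 β)).2 :=
      iso_notTwoE h₁ t₁ φ hv hu hq2
    have hq12 := out_ne (φ (edgeAt h₁ v))
    by_cases hcond : v = (Quot.out ((edgeAt h₁ v : G₁.edgeSet) : Sym2 α)).1
    · rw [if_pos hcond]
      have hXe : edgeAt h₂ (Quot.out (((φ (edgeAt h₁ v)) : G₂.edgeSet) : Sym2 β)).1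
          = φ (edgeAt h₁ v) := (notTwoE_unique h₂ hn1 hq1).symm
      have hnb : nb h₂ (Quot.out (((φ (edgeAt h₁ v)) : G₂.edgeSet) : Sym2 β)).1
          = (Quot.out (((φ (edgeAt h₁ v)) : G₂.edgeSet) : Sym2 β)).2 := by
        have hm := nb_mem_edgeAt h₂ (Quot.out (((φ (edgeAt h₁ v)) : G₂.edgeSet) : Sym2 β)).1
        rw [hXe] at hm
        rcases mem_out hm with h | h
        · exact absurd h (nb_ne h₂ _)
        · exact h
      have hnb2 : ¬TwoE G₂ (nb h₂ (Quot.out (((φ (edgeAt h₁ v)) : G₂.edgeSet) : Sym2 β)).1) := by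
        rw [hnb]; exact hn2
      rw [psi_of_iso h₂ t₁ φ.symm hn1 hnb2, hXe, φ.symm_apply_apply, if_pos rfl]
      exact hcond.symm
    · rw [if_neg hcond]
      have hv2 : v = (Quot.out ((edgeAt h₁ v : G₁.edgeSet) : Sym2 α)).2 := by
        have hm := mem_edgeAt h₁ v
        rw [← houte] at hm
        rcases Sym2.mem_iff.mp hm with h | h
        · exact absurd h hcond
        · exact h
      have hXe : edgeAt h₂ (Quot.out (((φ (edgeAt h₁ v)) : G₂.edgeSet) : Sym2 β)).2
          = φ (edgeAt h₁ v) := (notTwoE_unique h₂ hn2 hq2).symm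
      have hnb : nb h₂ (Quot.out (((φ (edgeAt h₁ v)) : G₂.edgeSet) : Sym2 β)).2
          = (Quot.out (((φ (edgeAt h₁ v)) : G₂.edgeSet) : Sym2 β)).1 := by
        have hm := nb_mem_edgeAt h₂ (Quot.out (((φ (edgeAt h₁ v)) : G₂.edgeSet) : Sym2 β)).2
        rw [hXe] at hm
        rcases mem_out hm with h | h
        · exact h
        · exact absurd h (nb_ne h₂ _)
      have hnb2 : ¬TwoE G₂ (nb h₂ (Quot.out (((φ (edgeAt h₁ v)) : G₂.edgeSet) : Sym2 β)).2) := by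
        rw [hnb]; exact hn1
      rw [psi_of_iso h₂ t₁ φ.symm hn2 hnb2, hXe, φ.symm_apply_apply,
        if_neg (fun hc => hq12 hc.symm)]
      exact hv2.symm

theorem psi_adj_pend (t₂ : G₂.CliqueFree 3) (φ : G₁.lineGraph ≃g G₂.lineGraph)
    {v v' : α} (hadj : G₁.Adj v v') (hv : TwoE G₁ v) (hv' : ¬TwoE G₁ v') :
    G₂.Adj (psi h₁ t₂ φ v) (psi h₁ t₂ φ v') := by
  have hge : (⟨s(v', v), G₁.mem_edgeSet.mpr hadj.symm⟩ : G₁.edgeSet) = edgeAt h₁ v' :=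
    notTwoE_unique h₁ hv' (Sym2.mem_mk_left _ _)
  have hnb : nb h₁ v' = v := by
    have hm := nb_mem_edgeAt h₁ v'
    rw [← hge] at hm
    rcases Sym2.mem_iff.mp hm with h | h
    · exact absurd h (nb_ne h₁ v')
    · exact h
  have hu : TwoE G₁ (nb h₁ v') := by rw [hnb]; exact hv
  rw [psi_of_twoE h₁ t₂ φ hv, psi_of_pend h₁ t₂ φ hv' hu]
  have hsp := Sym2.other_spec (psi2_P t₂ φ hu (edgeAt h₁ v') (nb_mem_edgeAt h₁ v'))
  have hpp : psi2 t₂ φ hv = psi2 t₂ φ hu := psi2_congr t₂ φ hnb.symm hv hu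
  rw [hpp]
  have hedge := (φ (edgeAt h₁ v')).2
  rw [← hsp] at hedge
  exact G₂.mem_edgeSet.mp hedge

theorem psi_adj (t₁ : G₁.CliqueFree 3) (t₂ : G₂.CliqueFree 3)
    (φ : G₁.lineGraph ≃g G₂.lineGraph) {v v' : α} (hadj : G₁.Adj v v') :
    G₂.Adj (psi h₁ t₂ φ v) (psi h₁ t₂ φ v') := by
  by_cases hv : TwoE G₁ v <;> by_cases hv' : TwoE G₁ v'
  · rw [psi_of_twoE h₁ t₂ φ hv, psi_of_twoE h₁ t₂ φ hv']
    have hne : psi2 t₂ φ hv ≠ psi2 t₂ φ hv' := fun h => hadj.ne (psi2_inj t₁ t₂ φ hv hv' h)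
    exact adj_of_mem hne
      (psi2_P t₂ φ hv ⟨s(v, v'), G₁.mem_edgeSet.mpr hadj⟩ (Sym2.mem_mk_left _ _))
      (psi2_P t₂ φ hv' ⟨s(v, v'), G₁.mem_edgeSet.mpr hadj⟩ (Sym2.mem_mk_right _ _))
  · exact psi_adj_pend h₁ t₂ φ hadj hv hv'
  · exact (psi_adj_pend h₁ t₂ φ hadj.symm hv' hv).symm
  · -- both endpoints have degree one
    have hge : (⟨s(v, v'), G₁.mem_edgeSet.mpr hadj⟩ : G₁.edgeSet) = edgeAt h₁ v :=
      notTwoE_unique h₁ hv (Sym2.mem_mk_left _ _)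
    have hmem1 : v' ∈ ((edgeAt h₁ v : G₁.edgeSet) : Sym2 α) := by
      rw [← hge]; exact Sym2.mem_mk_right _ _
    have hee : edgeAt h₁ v = edgeAt h₁ v' := notTwoE_unique h₁ hv' hmem1
    have hnb : nb h₁ v = v' := by
      have hm := nb_mem_edgeAt h₁ v
      rw [← hge] at hm
      rcases Sym2.mem_iff.mp hm with h | h
      · exact absurd h (nb_ne h₁ v)
      · exact h
    have hnb' : nb h₁ v' = v := by
      have hm := nb_mem_edgeAt h₁ v'
      rw [← hee, ← hge] at hm
      rcases Sym2.mem_iff.mp hm with h | h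
      · exact h
      · exact absurd h (nb_ne h₁ v')
    have hun : ¬TwoE G₁ (nb h₁ v) := by rw [hnb]; exact hv'
    have hun' : ¬TwoE G₁ (nb h₁ v') := by rw [hnb']; exact hv
    rw [psi_of_iso h₁ t₂ φ hv hun, psi_of_iso h₁ t₂ φ hv' hun', ← hee]
    have houte := out_spec ((edgeAt h₁ v : G₁.edgeSet) : Sym2 α)
    have houtq := out_spec (((φ (edgeAt h₁ v)) : G₂.edgeSet) : Sym2 β)
    have hA : G₂.Adj (Quot.out (((φ (edgeAt h₁ v)) : G₂.edgeSet) : Sym2 β)).1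
        (Quot.out (((φ (edgeAt h₁ v)) : G₂.edgeSet) : Sym2 β)).2 :=
      adj_of_mem (out_ne (φ (edgeAt h₁ v))) (out_fst_mem _) (out_snd_mem _)
    have hpe : s((Quot.out ((edgeAt h₁ v : G₁.edgeSet) : Sym2 α)).1,
        (Quot.out ((edgeAt h₁ v : G₁.edgeSet) : Sym2 α)).2) = s(v, v') := by
      rw [houte, edgeAt_coe h₁, hnb]
    rcases Sym2.eq_iff.mp hpe with ⟨ha, hb⟩ | ⟨ha, hb⟩
    · rw [if_pos ha.symm, if_neg (fun hc => hadj.ne' (hc.trans ha))]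
      exact hA
    · rw [if_neg (fun hc => hadj.ne (hc.trans ha)), if_pos ha.symm]
      exact hA.symm

end Psi

end WhitneyAux

/-- Whitney's theorem for triangle-free graphs without isolated vertices. -/
theorem whitney {α β : Type*} {G₁ : SimpleGraph α} {G₂ : SimpleGraph β}
    (t₁ : G₁.CliqueFree 3) (t₂ : G₂.CliqueFree 3)
    (h₁ : ∀ v : α, ∃ u, G₁.Adj v u) (h₂ : ∀ v : β, ∃ u, G₂.Adj v u)
    (φ : G₁.lineGraph ≃g G₂.lineGraph) : Nonempty (G₁ ≃g G₂) := by
  refine ⟨⟨⟨WhitneyAux.psi h₁ t₂ φ, WhitneyAux.psi h₂ t₁ φ.symm,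
    fun v => WhitneyAux.psi_leftInv h₁ h₂ t₁ t₂ φ v,
    fun w => WhitneyAux.psi_leftInv h₂ h₁ t₂ t₁ φ.symm w⟩, ?_⟩⟩
  intro a b
  show G₂.Adj (WhitneyAux.psi h₁ t₂ φ a) (WhitneyAux.psi h₁ t₂ φ b) ↔ G₁.Adj a b
  constructor
  · intro h
    have h2 := WhitneyAux.psi_adj h₂ t₂ t₁ φ.symm h
    rwa [WhitneyAux.psi_leftInv h₁ h₂ t₁ t₂ φ a,
      WhitneyAux.psi_leftInv h₁ h₂ t₁ t₂ φ b] at h2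
  · exact WhitneyAux.psi_adj h₁ t₁ t₂ φ


namespace Stmt4Aux

open WhitneyAux

variable {α β : Type*}

/-- A graph isomorphism induces an isomorphism of line graphs. -/
noncomputable def lineGraphIso {G : SimpleGraph α} {G' : SimpleGraph β} (f : G ≃g G') :
    G.lineGraph ≃g G'.lineGraph where
  toEquiv := f.mapEdgeSet
  map_rel_iff' := by
    intro e₁ e₂
    simp only [lineGraph_adj_iff_exists]
    constructor
    · rintro ⟨hne, x, hx1, hx2⟩
      have hx1' : x ∈ Sym2.map f (e₁ : Sym2 α) := hx1
      have hx2' : x ∈ Sym2.map f (e₂ : Sym2 α) := hx2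
      obtain ⟨a, ha, rfl⟩ := Sym2.mem_map.mp hx1'
      obtain ⟨a', ha', haa⟩ := Sym2.mem_map.mp hx2'
      have haa' : a' = a := f.toEquiv.injective haa
      exact ⟨fun h => hne (congrArg _ h), a, ha, haa' ▸ ha'⟩
    · rintro ⟨hne, x, hx1, hx2⟩
      refine ⟨fun h => hne (f.mapEdgeSet.injective h), f x, ?_, ?_⟩
      · exact Sym2.mem_map.mpr ⟨x, hx1, rfl⟩
      · exact Sym2.mem_map.mpr ⟨x, hx2, rfl⟩

variable {W : Type} {G : SimpleGraph W}

/-- The subgraph spanned by a set of edges. -/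
def subOfSet (S : Set G.edgeSet) : G.Subgraph where
  verts := {v | ∃ e ∈ S, v ∈ ((e : G.edgeSet) : Sym2 W)}
  Adj v w := ∃ h : G.Adj v w, (⟨s(v, w), h⟩ : G.edgeSet) ∈ S
  adj_sub := fun ⟨h, _⟩ => h
  edge_vert := fun ⟨h, hS⟩ => ⟨⟨s(_, _), h⟩, hS, Sym2.mem_mk_left _ _⟩
  symm := by
    constructor
    intro v w ⟨h, hS⟩
    refine ⟨h.symm, ?_⟩
    have he : (⟨s(w, v), h.symm⟩ : G.edgeSet) = ⟨s(v, w), h⟩ := Subtype.ext (Sym2.eq_swap)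
    rw [he]; exact hS

lemma mem_subOfSet_edgeSet {S : Set G.edgeSet} (e : G.edgeSet) :
    (e : Sym2 W) ∈ (subOfSet S).edgeSet ↔ e ∈ S := by
  obtain ⟨z, hz⟩ := e
  induction z using Sym2.ind with
  | _ v w =>
    rw [Subgraph.mem_edgeSet]
    constructor
    · rintro ⟨h, hS⟩
      exact hS
    · intro hS
      exact ⟨hz, hS⟩

lemma subOfSet_edgeSet (S : Set G.edgeSet) :
    {e : G.edgeSet | (e : Sym2 W) ∈ (subOfSet S).edgeSet} = S := by
  ext e
  exact mem_subOfSet_edgeSet e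

/-- The line graph of a subgraph is the induced subgraph of the line graph. -/
noncomputable def subLineIso (H : G.Subgraph) :
    H.coe.lineGraph ≃g (G.lineGraph.induce {e : G.edgeSet | (e : Sym2 W) ∈ H.edgeSet}) := by
  have hmap : ∀ ec : H.coe.edgeSet, Sym2.map Subtype.val (ec : Sym2 H.verts) ∈ H.edgeSet := by
    intro ec
    rw [← Subgraph.image_coe_edgeSet_coe H]
    exact ⟨↑ec, ec.2, rfl⟩
  refine ⟨Equiv.ofBijective
    (fun ec => ⟨⟨Sym2.map Subtype.val (ec : Sym2 H.verts), H.edgeSet_subset (hmap ec)⟩,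
      hmap ec⟩) ⟨?_, ?_⟩, ?_⟩
  · intro e f hef
    have h1 : Sym2.map Subtype.val (e : Sym2 H.verts) = Sym2.map Subtype.val (f : Sym2 H.verts) :=
      congrArg (fun x => (x.1 : Sym2 W)) hef
    exact Subtype.ext (Sym2.map.injective Subtype.val_injective h1)
  · rintro ⟨⟨z, hz⟩, hzH⟩
    induction z using Sym2.ind with
    | _ v w =>
      have hA : H.Adj v w := Subgraph.mem_edgeSet.mp hzH
      refine ⟨⟨s(⟨v, hA.fst_mem⟩, ⟨w, hA.snd_mem⟩), ?_⟩, ?_⟩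
      · rw [SimpleGraph.mem_edgeSet]
        exact (Subgraph.coe_adj _ _ _).mpr hA
      · apply Subtype.ext
        apply Subtype.ext
        simp [Sym2.map_pair_eq]
  · intro e f
    simp only [comap_adj, Function.Embedding.coe_subtype, Equiv.ofBijective_apply,
      lineGraph_adj_iff_exists]
    constructor
    · rintro ⟨hne, x, hx1, hx2⟩
      have hx1' : x ∈ Sym2.map Subtype.val (e : Sym2 H.verts) := hx1
      have hx2' : x ∈ Sym2.map Subtype.val (f : Sym2 H.verts) := hx2
      obtain ⟨a, ha, rfl⟩ := Sym2.mem_map.mp hx1'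
      obtain ⟨a', ha', haa⟩ := Sym2.mem_map.mp hx2'
      have haa' : a' = a := Subtype.val_injective haa
      exact ⟨fun h => hne (by rw [h]), a, ha, haa' ▸ ha'⟩
    · rintro ⟨hne, x, hx1, hx2⟩
      refine ⟨?_, (x : W), Sym2.mem_map.mpr ⟨x, hx1, rfl⟩, Sym2.mem_map.mpr ⟨x, hx2, rfl⟩⟩
      intro h
      apply hne
      apply Subtype.ext
      have h1 : Sym2.map Subtype.val (e : Sym2 H.verts) = Sym2.map Subtype.val (f : Sym2 H.verts) :=
        congrArg (fun y => ((y : G.edgeSet) : Sym2 W)) h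
      exact Sym2.map.injective Subtype.val_injective h1

lemma subOfSet_no_isolated (S : Set G.edgeSet) :
    ∀ v : (subOfSet S).verts, ∃ u, (subOfSet S).coe.Adj v u := by
  rintro ⟨v, e, heS, hve⟩
  have hsp := Sym2.other_spec hve
  have hadj : G.Adj v (Sym2.Mem.other hve) := by
    have he2 := e.2
    rw [← hsp] at he2
    exact G.mem_edgeSet.mp he2
  have hmemS : (⟨s(v, Sym2.Mem.other hve), hadj⟩ : G.edgeSet) ∈ S := by
    have he : (⟨s(v, Sym2.Mem.other hve), hadj⟩ : G.edgeSet) = e := Subtype.ext hsp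
    rw [he]; exact heS
  have hAdj : (subOfSet S).Adj v (Sym2.Mem.other hve) := ⟨hadj, hmemS⟩
  exact ⟨⟨Sym2.Mem.other hve, hAdj.snd_mem⟩, (Subgraph.coe_adj _ _ _).mpr hAdj⟩

lemma no_isolated_of_iso {V : Type} {F : SimpleGraph V} (hiso : ∀ v : V, ∃ u : V, F.Adj v u)
    {H : G.Subgraph} (hH : Nonempty (H.coe ≃g F)) : ∀ v ∈ H.verts, ∃ u, H.Adj v u := by
  intro v hv
  obtain ⟨f⟩ := hH
  obtain ⟨u, hu⟩ := hiso (f ⟨v, hv⟩)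
  refine ⟨↑(f.symm u), ?_⟩
  have h2 : H.coe.Adj ⟨v, hv⟩ (f.symm u) := by
    apply f.map_rel_iff.mp
    rw [RelIso.apply_symm_apply]
    exact hu
  exact (Subgraph.coe_adj _ _ _).mp h2

lemma subOfSet_eq (H : G.Subgraph) (hne : ∀ v ∈ H.verts, ∃ u, H.Adj v u) :
    subOfSet {e : G.edgeSet | (e : Sym2 W) ∈ H.edgeSet} = H := by
  apply Subgraph.ext
  · ext v
    constructor
    · rintro ⟨⟨z, hzG⟩, he, hv⟩
      induction z using Sym2.ind with
      | _ a b =>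
        have hA : H.Adj a b := Subgraph.mem_edgeSet.mp he
        rcases Sym2.mem_iff.mp hv with h | h
        · exact h ▸ hA.fst_mem
        · exact h ▸ hA.snd_mem
    · intro hv
      obtain ⟨u, hu⟩ := hne v hv
      exact ⟨⟨s(v, u), H.adj_sub hu⟩, Subgraph.mem_edgeSet.mpr hu, Sym2.mem_mk_left _ _⟩
  · funext v w
    apply propext
    constructor
    · rintro ⟨h, hS⟩
      exact Subgraph.mem_edgeSet.mp hS
    · intro h
      exact ⟨H.adj_sub h, Subgraph.mem_edgeSet.mpr h⟩

end Stmt4Aux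

/-- Let `F` and `G` be finite bipartite graphs, `F` without isolated vertices. The number of
vertex subsets `S` of the line graph `L(G)` whose induced subgraph is isomorphic to `L(F)`
equals the number of subgraphs of `G` isomorphic to `F`. -/
theorem stmt4 {V W : Type} [Fintype V] [Fintype W]
    (F : SimpleGraph V) (G : SimpleGraph W)
    (hF : F.Colorable 2) (hG : G.Colorable 2)
    (hiso : ∀ v : V, ∃ u : V, F.Adj v u) :
    Nat.card {S : Set G.edgeSet // Nonempty ((G.lineGraph.induce S) ≃g F.lineGraph)} =
      Nat.card {H : G.Subgraph // Nonempty (H.coe ≃g F)} := by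
  have tF : F.CliqueFree 3 := hF.cliqueFree (by norm_num)
  apply Nat.card_congr
  refine { toFun := fun p => ⟨Stmt4Aux.subOfSet p.1, ?_⟩,
           invFun := fun p => ⟨{e : G.edgeSet | (e : Sym2 W) ∈ p.1.edgeSet}, ?_⟩,
           left_inv := ?_, right_inv := ?_ }
  · obtain ⟨S, hS⟩ := p
    have i1 := Stmt4Aux.subLineIso (Stmt4Aux.subOfSet S)
    rw [Stmt4Aux.subOfSet_edgeSet S] at i1
    have tH : (Stmt4Aux.subOfSet S).coe.Colorable 2 := ⟨hG.some.comp (Stmt4Aux.subOfSet S).hom⟩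
    exact whitney (tH.cliqueFree (by norm_num)) tF (Stmt4Aux.subOfSet_no_isolated S) hiso
      (i1.trans hS.some)
  · obtain ⟨H, hH⟩ := p
    exact ⟨(Stmt4Aux.subLineIso H).symm.trans (Stmt4Aux.lineGraphIso hH.some)⟩
  · intro p
    exact Subtype.ext (Stmt4Aux.subOfSet_edgeSet p.1)
  · intro p
    exact Subtype.ext (Stmt4Aux.subOfSet_eq p.1 (Stmt4Aux.no_isolated_of_iso hiso p.2))
end

section
/- Let F and F' be finite bipartite simple graphs without isolated vertices. If the line graphs L(F) and L(F') are isomorphic, then F and F' are isomorphic. -/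
open SimpleGraph

section Whitney

variable {α β : Type} {G : SimpleGraph α} {G' : SimpleGraph β}

private lemma triFree (hG : G.Colorable 2) {a b c : α}
    (h1 : G.Adj a b) (h2 : G.Adj b c) (h3 : G.Adj a c) : False := by
  obtain ⟨C⟩ := hG
  have v1 := C.valid h1
  have v2 := C.valid h2
  have v3 := C.valid h3
  have l1 := (C a).isLt
  have l2 := (C b).isLt
  have l3 := (C c).isLt
  have n1 : (C a).val ≠ (C b).val := fun h => v1 (Fin.ext h)
  have n2 : (C b).val ≠ (C c).val := fun h => v2 (Fin.ext h)
  have n3 : (C a).val ≠ (C c).val := fun h => v3 (Fin.ext h)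
  omega

private lemma edge_decomp (e : G.edgeSet) :
    ∃ a b, G.Adj a b ∧ (e : Sym2 α) = s(a, b) := by
  obtain ⟨e, he⟩ := e
  induction e using Sym2.ind with
  | _ a b => exact ⟨a, b, G.mem_edgeSet.1 he, rfl⟩

private lemma edge_eq {e : G.edgeSet} {a b : α} (hab : a ≠ b)
    (ha : a ∈ (e : Sym2 α)) (hb : b ∈ (e : Sym2 α)) : (e : Sym2 α) = s(a, b) :=
  (Sym2.mem_and_mem_iff hab).1 ⟨ha, hb⟩

private lemma adj_of_mem {e : G.edgeSet} {a b : α} (hab : a ≠ b)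
    (ha : a ∈ (e : Sym2 α)) (hb : b ∈ (e : Sym2 α)) : G.Adj a b :=
  G.mem_edgeSet.1 (edge_eq hab ha hb ▸ e.2)

private lemma edge_unique {e₁ e₂ : G.edgeSet} {a b : α} (hab : a ≠ b)
    (h1a : a ∈ (e₁ : Sym2 α)) (h1b : b ∈ (e₁ : Sym2 α))
    (h2a : a ∈ (e₂ : Sym2 α)) (h2b : b ∈ (e₂ : Sym2 α)) : e₁ = e₂ :=
  Subtype.ext ((edge_eq hab h1a h1b).trans (edge_eq hab h2a h2b).symm)

private lemma ladj {e₁ e₂ : G.edgeSet} (hne : e₁ ≠ e₂) {x : α}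
    (h1 : x ∈ (e₁ : Sym2 α)) (h2 : x ∈ (e₂ : Sym2 α)) : G.lineGraph.Adj e₁ e₂ :=
  lineGraph_adj_iff_exists.2 ⟨hne, x, h1, h2⟩

private lemma pushStar (hG' : G'.Colorable 2) (φ : G.lineGraph ≃g G'.lineGraph)
    {v : α} {e₁ e₂ : G.edgeSet} (h1 : v ∈ (e₁ : Sym2 α)) (h2 : v ∈ (e₂ : Sym2 α))
    (hne : e₁ ≠ e₂) :
    ∃ w : β, ∀ e : G.edgeSet, v ∈ (e : Sym2 α) → w ∈ ((φ e : G'.edgeSet) : Sym2 β) := by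
  have hadj : G'.lineGraph.Adj (φ e₁) (φ e₂) := φ.map_rel_iff.2 (ladj hne h1 h2)
  obtain ⟨hne', w, hw1, hw2⟩ := lineGraph_adj_iff_exists.1 hadj
  refine ⟨w, fun e he => ?_⟩
  by_contra hwe
  have hee1 : e ≠ e₁ := by rintro rfl; exact hwe hw1
  have hee2 : e ≠ e₂ := by rintro rfl; exact hwe hw2
  obtain ⟨-, a, hae, hae1⟩ := lineGraph_adj_iff_exists.1 (φ.map_rel_iff.2 (ladj hee1 he h1))
  obtain ⟨-, b, hbe, hbe2⟩ := lineGraph_adj_iff_exists.1 (φ.map_rel_iff.2 (ladj hee2 he h2))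
  have haw : a ≠ w := fun h => hwe (h ▸ hae)
  have hbw : b ≠ w := fun h => hwe (h ▸ hbe)
  have hab : a ≠ b := by
    rintro rfl
    exact hne' (edge_unique haw hae1 hw1 hbe2 hw2)
  have A1 : G'.Adj w a := adj_of_mem (Ne.symm haw) hw1 hae1
  have A2 : G'.Adj w b := adj_of_mem (Ne.symm hbw) hw2 hbe2
  have A3 : G'.Adj a b := adj_of_mem hab hae hbe
  exact triFree hG' A1 A3 A2

private lemma exists_good (hGc : G.Colorable 2) (hG'c : G'.Colorable 2)
    (hV : ∀ v : α, ∃ u : α, G.Adj v u) (φ : G.lineGraph ≃g G'.lineGraph) :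
    ∃ f : α → β,
      (∀ (v : α) (e : G.edgeSet), v ∈ (e : Sym2 α) → f v ∈ ((φ e : G'.edgeSet) : Sym2 β)) ∧
      (∀ (v u : α) (e : G.edgeSet), v ∈ (e : Sym2 α) → u ∈ (e : Sym2 α) → v ≠ u →
        f v ≠ f u) := by
  classical
  have C : G.Coloring (Fin 2) := hGc.some
  have hev : ∀ v : α, ∃ e : G.edgeSet, v ∈ (e : Sym2 α) := by
    intro v
    obtain ⟨u, hu⟩ := hV v
    exact ⟨⟨s(v, u), G.mem_edgeSet.2 hu⟩, Sym2.mem_mk_left v u⟩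
  choose ev hevm using hev
  have hp : ∀ e' : G'.edgeSet, ∃ p : β × β, p.1 ≠ p.2 ∧ (e' : Sym2 β) = s(p.1, p.2) := by
    intro e'
    obtain ⟨a, b, hab, he⟩ := edge_decomp e'
    exact ⟨(a, b), hab.ne, he⟩
  choose pt hpt using hp
  set Deg2 : α → Prop := fun v =>
    ∃ e₁ e₂ : G.edgeSet, v ∈ (e₁ : Sym2 α) ∧ v ∈ (e₂ : Sym2 α) ∧ e₁ ≠ e₂ with hDeg2
  have key : ∀ v, Deg2 v →
      ∃ w, ∀ e : G.edgeSet, v ∈ (e : Sym2 α) → w ∈ ((φ e : G'.edgeSet) : Sym2 β) := by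
    rintro v ⟨e₁, e₂, h1, h2, hne⟩
    exact pushStar hG'c φ h1 h2 hne
  let fA : α → β := fun v => if h : Deg2 v then (key v h).choose else (pt (φ (ev v))).1
  have hfA : ∀ v (h : Deg2 v) (e : G.edgeSet), v ∈ (e : Sym2 α) →
      fA v ∈ ((φ e : G'.edgeSet) : Sym2 β) := by
    intro v h e he
    have : fA v = (key v h).choose := dif_pos h
    rw [this]
    exact (key v h).choose_spec e he
  have huniq : ∀ v, ¬Deg2 v → ∀ e : G.edgeSet, v ∈ (e : Sym2 α) → e = ev v := by
    intro v h e he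
    by_contra hne
    exact h ⟨e, ev v, he, hevm v, hne⟩
  let pa : α → α := fun v => Sym2.Mem.other (hevm v)
  have hpa_mem : ∀ v, pa v ∈ ((ev v : G.edgeSet) : Sym2 α) := fun v => Sym2.other_mem _
  have hpa_spec : ∀ v, s(v, pa v) = ((ev v : G.edgeSet) : Sym2 α) := fun v => Sym2.other_spec _
  have hpa_eq : ∀ (u v : α) (e : G.edgeSet), u ∈ (e : Sym2 α) → v ∈ (e : Sym2 α) →
      v ≠ u → ¬Deg2 u → ev u = e ∧ pa u = v := by
    intro u v e hu hvm hvu h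
    have he : e = ev u := huniq u h e hu
    refine ⟨he.symm, ?_⟩
    have h1 : s(u, pa u) = ((ev u : G.edgeSet) : Sym2 α) := hpa_spec u
    have h2 : ((e : G.edgeSet) : Sym2 α) = s(v, u) := edge_eq hvu hvm hu
    rw [← he, h2] at h1
    rw [Sym2.eq_swap (a := v)] at h1
    exact Sym2.congr_right.1 h1
  have exB1 : ∀ v, ¬Deg2 v → Deg2 (pa v) →
      ∃ w, w ∈ ((φ (ev v) : G'.edgeSet) : Sym2 β) ∧ w ≠ fA (pa v) := by
    intro v h h2
    have hmem : fA (pa v) ∈ ((φ (ev v) : G'.edgeSet) : Sym2 β) :=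
      hfA (pa v) h2 (ev v) (hpa_mem v)
    exact ⟨Sym2.Mem.other hmem, Sym2.other_mem _,
      Sym2.other_ne (G'.not_isDiag_of_mem_edgeSet (φ (ev v)).2) _⟩
  let f : α → β := fun v =>
    if h : Deg2 v then fA v
    else if h2 : Deg2 (pa v) then (exB1 v h h2).choose
    else if C v = 0 then (pt (φ (ev v))).1 else (pt (φ (ev v))).2
  have P1 : ∀ (v : α) (e : G.edgeSet), v ∈ (e : Sym2 α) →
      f v ∈ ((φ e : G'.edgeSet) : Sym2 β) := by
    intro v e he
    by_cases h : Deg2 v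
    · have : f v = fA v := dif_pos h
      rw [this]; exact hfA v h e he
    · have he' : e = ev v := huniq v h e he
      subst he'
      by_cases h2 : Deg2 (pa v)
      · have : f v = (exB1 v h h2).choose := by
          show (if h' : Deg2 v then fA v else _) = _
          rw [dif_neg h, dif_pos h2]
        rw [this]; exact (exB1 v h h2).choose_spec.1
      · have : f v = if C v = 0 then (pt (φ (ev v))).1 else (pt (φ (ev v))).2 := by
          show (if h' : Deg2 v then fA v else _) = _
          rw [dif_neg h, dif_neg h2]
        rw [this]
        by_cases hc : C v = 0
        · rw [if_pos hc, (hpt (φ (ev v))).2]; exact Sym2.mem_mk_left _ _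
        · rw [if_neg hc, (hpt (φ (ev v))).2]; exact Sym2.mem_mk_right _ _
  have P2 : ∀ (v u : α) (e : G.edgeSet), v ∈ (e : Sym2 α) → u ∈ (e : Sym2 α) → v ≠ u →
      f v ≠ f u := by
    intro v u e hv hu hvu hfvu
    have hadj : G.Adj v u := adj_of_mem hvu hv hu
    by_cases h : Deg2 v <;> by_cases h' : Deg2 u
    · -- both large degree: triangle argument
      obtain ⟨e₁, e₂, he₁, he₂, hne⟩ := h'
      have hEb : ∃ eb : G.edgeSet, u ∈ (eb : Sym2 α) ∧ eb ≠ e := by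
        by_cases he1 : e₁ = e
        · exact ⟨e₂, he₂, fun hh => hne (he1.trans hh.symm)⟩
        · exact ⟨e₁, he₁, he1⟩
      obtain ⟨e₁', e₂', he₁', he₂', hne'⟩ := h
      have hEa : ∃ ea : G.edgeSet, v ∈ (ea : Sym2 α) ∧ ea ≠ e := by
        by_cases he1 : e₁' = e
        · exact ⟨e₂', he₂', fun hh => hne' (he1.trans hh.symm)⟩
        · exact ⟨e₁', he₁', he1⟩
      obtain ⟨ea, hva, hae⟩ := hEa
      obtain ⟨eb, hub, hbe⟩ := hEb
      have hanb : ea ≠ eb := by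
        rintro rfl
        exact hae (edge_unique hvu hva hub hv hu)
      have hxa : f v ∈ ((φ ea : G'.edgeSet) : Sym2 β) := P1 v ea hva
      have hxb : f v ∈ ((φ eb : G'.edgeSet) : Sym2 β) := hfvu ▸ P1 u eb hub
      have hLadj : G.lineGraph.Adj ea eb :=
        φ.map_rel_iff.1 (ladj (fun hh => hanb (φ.toEquiv.injective hh)) hxa hxb)
      obtain ⟨-, y, hya, hyb⟩ := lineGraph_adj_iff_exists.1 hLadj
      have hyv : y ≠ v := by
        rintro rfl
        exact hbe (edge_unique hvu hyb hub hv hu)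
      have hyu : y ≠ u := by
        rintro rfl
        exact hae (edge_unique hvu hva hya hv hu)
      have a1 : G.Adj v y := adj_of_mem (Ne.symm hyv) hva hya
      have a2 : G.Adj u y := adj_of_mem (Ne.symm hyu) hub hyb
      exact triFree hGc hadj a2 a1
    · -- v large, u degree one
      obtain ⟨heu, hpau⟩ := hpa_eq u v e hu hv hvu h'
      have h2 : Deg2 (pa u) := by rw [hpau]; exact h
      have hfu : f u = (exB1 u h' h2).choose := by
        show (if hx : Deg2 u then fA u else _) = _
        rw [dif_neg h', dif_pos h2]
      have hne1 : f u ≠ fA (pa u) := hfu ▸ (exB1 u h' h2).choose_spec.2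
      rw [hpau] at hne1
      have hfv : f v = fA v := dif_pos h
      exact hne1 (hfvu ▸ hfv.symm ▸ rfl)
    · -- u large, v degree one
      obtain ⟨hevv, hpav⟩ := hpa_eq v u e hv hu (Ne.symm hvu) h
      have h2 : Deg2 (pa v) := by rw [hpav]; exact h'
      have hfv : f v = (exB1 v h h2).choose := by
        show (if hx : Deg2 v then fA v else _) = _
        rw [dif_neg h, dif_pos h2]
      have hne1 : f v ≠ fA (pa v) := hfv ▸ (exB1 v h h2).choose_spec.2
      rw [hpav] at hne1
      have hfu : f u = fA u := dif_pos h'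
      exact hne1 (hfvu.trans hfu)
    · -- both degree one: use the coloring
      obtain ⟨heu, hpau⟩ := hpa_eq u v e hu hv hvu h'
      obtain ⟨hevv, hpav⟩ := hpa_eq v u e hv hu (Ne.symm hvu) h
      have h2v : ¬Deg2 (pa v) := by rw [hpav]; exact h'
      have h2u : ¬Deg2 (pa u) := by rw [hpau]; exact h
      have hfv : f v = if C v = 0 then (pt (φ (ev v))).1 else (pt (φ (ev v))).2 := by
        show (if hx : Deg2 v then fA v else _) = _
        rw [dif_neg h, dif_neg h2v]
      have hfu : f u = if C u = 0 then (pt (φ (ev u))).1 else (pt (φ (ev u))).2 := by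
        show (if hx : Deg2 u then fA u else _) = _
        rw [dif_neg h', dif_neg h2u]
      have hee : ev u = ev v := heu.trans hevv.symm
      rw [hee] at hfu
      have hC : C v ≠ C u := C.valid hadj
      have hCval : (C v).val ≠ (C u).val := fun hh => hC (Fin.ext hh)
      have hptne := (hpt (φ (ev v))).1
      by_cases hc : C v = 0
      · have hcu : ¬(C u = 0) := fun hh => hC (hc.trans hh.symm)
        rw [if_pos hc] at hfv
        rw [if_neg hcu] at hfu
        exact hptne (hfv ▸ hfu ▸ hfvu)
      · have hcu : C u = 0 := by
          have b1 := (C v).isLt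
          have b2 := (C u).isLt
          have : (C v).val ≠ 0 := fun hh => hc (Fin.ext hh)
          exact Fin.ext (by omega)
        rw [if_neg hc] at hfv
        rw [if_pos hcu] at hfu
        exact hptne (hfv ▸ hfu ▸ hfvu).symm
  exact ⟨f, P1, P2⟩

private lemma inj_good (hGc : G.Colorable 2) (hV : ∀ v : α, ∃ u : α, G.Adj v u)
    (φ : G.lineGraph ≃g G'.lineGraph) (f : α → β)
    (P1 : ∀ (v : α) (e : G.edgeSet), v ∈ (e : Sym2 α) → f v ∈ ((φ e : G'.edgeSet) : Sym2 β))
    (P2 : ∀ (v u : α) (e : G.edgeSet), v ∈ (e : Sym2 α) → u ∈ (e : Sym2 α) → v ≠ u →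
      f v ≠ f u) : Function.Injective f := by
  intro v u hfvu
  by_contra hvu
  have hnadj : ¬ G.Adj v u := fun ha =>
    P2 v u ⟨s(v, u), G.mem_edgeSet.2 ha⟩ (Sym2.mem_mk_left v u) (Sym2.mem_mk_right v u)
      hvu hfvu
  -- both v and u have a unique incident edge
  have claim : ∀ x y : α, x ≠ y → ¬G.Adj x y → f x = f y →
      ∀ e₁ e₂ : G.edgeSet, x ∈ (e₁ : Sym2 α) → x ∈ (e₂ : Sym2 α) → e₁ = e₂ := by
    intro x y hxy hna hfxy e₁ e₂ h1 h2
    by_contra hne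
    obtain ⟨y', hy'⟩ := hV y
    set eu : G.edgeSet := ⟨s(y, y'), G.mem_edgeSet.2 hy'⟩ with heu
    have hyu : y ∈ (eu : Sym2 α) := Sym2.mem_mk_left y y'
    have hxnot : x ∉ (eu : Sym2 α) := fun hh => hna (adj_of_mem hxy hh hyu)
    have hne1 : eu ≠ e₁ := fun hh => hxnot (hh ▸ h1)
    have hne2 : eu ≠ e₂ := fun hh => hxnot (hh ▸ h2)
    have hx1 : f x ∈ ((φ e₁ : G'.edgeSet) : Sym2 β) := P1 x e₁ h1
    have hx2 : f x ∈ ((φ e₂ : G'.edgeSet) : Sym2 β) := P1 x e₂ h2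
    have hxu : f x ∈ ((φ eu : G'.edgeSet) : Sym2 β) := hfxy ▸ P1 y eu hyu
    have A1 : G.lineGraph.Adj eu e₁ :=
      φ.map_rel_iff.1 (ladj (fun hh => hne1 (φ.toEquiv.injective hh)) hxu hx1)
    have A2 : G.lineGraph.Adj eu e₂ :=
      φ.map_rel_iff.1 (ladj (fun hh => hne2 (φ.toEquiv.injective hh)) hxu hx2)
    obtain ⟨-, y₁, hy₁u, hy₁1⟩ := lineGraph_adj_iff_exists.1 A1
    obtain ⟨-, y₂, hy₂u, hy₂2⟩ := lineGraph_adj_iff_exists.1 A2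
    have hy₁x : y₁ ≠ x := fun hh => hxnot (hh ▸ hy₁u)
    have hy₂x : y₂ ≠ x := fun hh => hxnot (hh ▸ hy₂u)
    have hy12 : y₁ ≠ y₂ := by
      rintro rfl
      exact hne (edge_unique hy₁x hy₁1 h1 hy₂2 h2)
    have a1 : G.Adj x y₁ := adj_of_mem (Ne.symm hy₁x) h1 hy₁1
    have a2 : G.Adj x y₂ := adj_of_mem (Ne.symm hy₂x) h2 hy₂2
    have a3 : G.Adj y₁ y₂ := adj_of_mem hy12 hy₁u hy₂u
    exact triFree hGc a1 a3 a2
  obtain ⟨v', hv'⟩ := hV v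
  obtain ⟨u', hu'⟩ := hV u
  set evv : G.edgeSet := ⟨s(v, v'), G.mem_edgeSet.2 hv'⟩ with hevv
  set euu : G.edgeSet := ⟨s(u, u'), G.mem_edgeSet.2 hu'⟩ with heuu
  have hvm : v ∈ (evv : Sym2 α) := Sym2.mem_mk_left v v'
  have hum : u ∈ (euu : Sym2 α) := Sym2.mem_mk_left u u'
  have hvnotu : v ∉ (euu : Sym2 α) := fun hh => hnadj (adj_of_mem hvu hh hum)
  have hunotv : u ∉ (evv : Sym2 α) := fun hh => hnadj (adj_of_mem hvu hvm hh)
  have hneq : evv ≠ euu := fun hh => hunotv (hh ▸ hum)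
  have hx1 : f v ∈ ((φ evv : G'.edgeSet) : Sym2 β) := P1 v evv hvm
  have hx2 : f v ∈ ((φ euu : G'.edgeSet) : Sym2 β) := hfvu ▸ P1 u euu hum
  have A : G.lineGraph.Adj evv euu :=
    φ.map_rel_iff.1 (ladj (fun hh => hneq (φ.toEquiv.injective hh)) hx1 hx2)
  obtain ⟨-, y, hyv, hyu⟩ := lineGraph_adj_iff_exists.1 A
  have hyvne : y ≠ v := fun hh => hvnotu (hh ▸ hyu)
  have hyune : y ≠ u := fun hh => hunotv (hh ▸ hyv)
  have hfy1 : f v ≠ f y := P2 v y evv hvm hyv (Ne.symm hyvne)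
  have hfy2 : f u ≠ f y := P2 u y euu hum hyu (Ne.symm hyune)
  have hyp1 : f y ∈ ((φ evv : G'.edgeSet) : Sym2 β) := P1 y evv hyv
  have hyp2 : f y ∈ ((φ euu : G'.edgeSet) : Sym2 β) := P1 y euu hyu
  exact hneq (φ.toEquiv.injective (edge_unique hfy1 hx1 hyp1 hx2 hyp2))

end Whitney

/-- Whitney's theorem for bipartite graphs: if `F` and `F'` are finite bipartite graphs
without isolated vertices and their line graphs are isomorphic, then `F` and `F'` are
isomorphic. -/
theorem stmt6 {V W : Type} [Fintype V] [Fintype W]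
    (F : SimpleGraph V) (F' : SimpleGraph W) (hF : F.Colorable 2) (hF' : F'.Colorable 2)
    (hV : ∀ v : V, ∃ u : V, F.Adj v u) (hW : ∀ w : W, ∃ u : W, F'.Adj w u)
    (h : Nonempty (F.lineGraph ≃g F'.lineGraph)) : Nonempty (F ≃g F') := by
  obtain ⟨φ⟩ := h
  obtain ⟨f, P1, P2⟩ := exists_good hF hF' hV φ
  obtain ⟨g, Q1, Q2⟩ := exists_good hF' hF hW φ.symm
  have finj : Function.Injective f := inj_good hF hV φ f P1 P2
  have ginj : Function.Injective g := inj_good hF' hW φ.symm g Q1 Q2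
  have hcard : Fintype.card V = Fintype.card W :=
    le_antisymm (Fintype.card_le_of_injective f finj) (Fintype.card_le_of_injective g ginj)
  have hbij : Function.Bijective f :=
    (Fintype.bijective_iff_injective_and_card f).2 ⟨finj, hcard⟩
  refine ⟨⟨Equiv.ofBijective f hbij, ?_⟩⟩
  intro a b
  show F'.Adj (f a) (f b) ↔ F.Adj a b
  constructor
  · intro hadj'
    set e' : F'.edgeSet := ⟨s(f a, f b), F'.mem_edgeSet.2 hadj'⟩ with he'
    obtain ⟨a₀, b₀, hadj₀, hdec⟩ := edge_decomp (φ.symm e')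
    have hma : a₀ ∈ ((φ.symm e' : F.edgeSet) : Sym2 V) := by
      rw [hdec]; exact Sym2.mem_mk_left _ _
    have hmb : b₀ ∈ ((φ.symm e' : F.edgeSet) : Sym2 V) := by
      rw [hdec]; exact Sym2.mem_mk_right _ _
    have h1 : f a₀ ∈ ((φ (φ.symm e') : F'.edgeSet) : Sym2 W) := P1 a₀ _ hma
    have h2 : f b₀ ∈ ((φ (φ.symm e') : F'.edgeSet) : Sym2 W) := P1 b₀ _ hmb
    rw [φ.apply_symm_apply] at h1 h2
    have h1' : f a₀ = f a ∨ f a₀ = f b := Sym2.mem_iff.1 h1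
    have h2' : f b₀ = f a ∨ f b₀ = f b := Sym2.mem_iff.1 h2
    have hne : f a₀ ≠ f b₀ := P2 a₀ b₀ _ hma hmb hadj₀.ne
    rcases h1' with h1' | h1' <;> rcases h2' with h2' | h2'
    · exact absurd (h1'.trans h2'.symm) hne
    · have ha : a₀ = a := finj h1'
      have hb : b₀ = b := finj h2'
      exact ha ▸ hb ▸ hadj₀
    · have ha : a₀ = b := finj h1'
      have hb : b₀ = a := finj h2'
      exact (ha ▸ hb ▸ hadj₀).symm
    · exact absurd (h1'.trans h2'.symm) hne
  · intro hadj
    set e : F.edgeSet := ⟨s(a, b), F.mem_edgeSet.2 hadj⟩ with he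
    have h1 : f a ∈ ((φ e : F'.edgeSet) : Sym2 W) := P1 a e (Sym2.mem_mk_left a b)
    have h2 : f b ∈ ((φ e : F'.edgeSet) : Sym2 W) := P1 b e (Sym2.mem_mk_right a b)
    have hne : f a ≠ f b := P2 a b e (Sym2.mem_mk_left a b) (Sym2.mem_mk_right a b) hadj.ne
    have heq := edge_eq hne h1 h2
    exact F'.mem_edgeSet.1 (heq ▸ (φ e).2)
end

section
/- Let H be a finite simple graph such that every homomorphism from H to itself is an isomorphism (i.e., H is a core), let G be a finite simple graph, and let c : V(G) → V(H) be a homomorphism from G to H. Then |Hom(H,G)| = |Aut(H)| · |{h ∈ Hom(H,G) : c(h(v)) = v for all v ∈ V(H)}|. -/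
open SimpleGraph

/-- Let `H` be a finite core (every endomorphism of `H` is an isomorphism), `G` a finite
graph, and `c : G →g H` a homomorphism (an `H`-coloring of `G`). Then
`|Hom(H,G)| = |Aut(H)| · |{h ∈ Hom(H,G) : c(h(v)) = v for all v}|`. -/
theorem stmt7 {VH VG : Type} [Fintype VH] [Fintype VG]
    (H : SimpleGraph VH) (G : SimpleGraph VG)
    (hcore : ∀ h : H →g H, ∃ e : H ≃g H, ∀ v : VH, e v = h v)
    (c : G →g H) :
    Nat.card (H →g G) =
      Nat.card (H ≃g H) * Nat.card {h : H →g G // ∀ v : VH, c (h v) = v} := by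
  have key : Nat.card ((H ≃g H) × {h : H →g G // ∀ v : VH, c (h v) = v})
      = Nat.card (H →g G) := by
    apply Nat.card_eq_of_bijective
      (fun p => p.2.val.comp p.1.toHom)
    constructor
    · rintro ⟨e₁, h₁, hp₁⟩ ⟨e₂, h₂, hp₂⟩ heq
      have hfun : ∀ v, h₁ (e₁ v) = h₂ (e₂ v) := fun v =>
        congrArg (fun (f : H →g G) => f v) heq
      have he : ∀ v, e₁ v = e₂ v := by
        intro v
        have := congrArg c (hfun v)
        simpa [hp₁, hp₂] using this
      have he' : e₁ = e₂ := by
        ext v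
        exact he v
      subst he'
      have hh : h₁ = h₂ := by
        ext w
        obtain ⟨v, rfl⟩ := e₁.surjective w
        exact hfun v
      simp [hh]
    · intro f
      obtain ⟨e, he⟩ := hcore (c.comp f)
      refine ⟨⟨e, f.comp e.symm.toHom, ?_⟩, ?_⟩
      · intro v
        have := he (e.symm v)
        exact this.symm.trans (e.apply_symm_apply v)
      · ext v
        simp
  rw [← key, Nat.card_prod]
end

section
/- Let H and G be finite simple graphs and let c : V(G) → V(H) be a function such that for every edge {u,v} of G, either c(u) = c(v) or {c(u),c(v)} ∈ E(H). Then the number of homomorphisms h from H to G such that c ∘ h : V(H) → V(H) is surjective equals |Aut(H)| times the number of homomorphisms h from H to G such that c(h(v)) = v for all v ∈ V(H). -/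
open SimpleGraph

private lemma adj_pow {V : Type} (H : SimpleGraph V) (f : Equiv.Perm V)
    (hf : ∀ u v, H.Adj u v → H.Adj (f u) (f v)) :
    ∀ (k : ℕ) (u v : V), H.Adj u v → H.Adj ((f ^ k) u) ((f ^ k) v) := by
  intro k
  induction k with
  | zero => simp
  | succ n ih =>
    intro u v h
    simpa [pow_succ, Equiv.Perm.mul_apply] using ih _ _ (hf u v h)

/-- A bijective adjacency-preserving self-map of a finite graph is an automorphism. -/
private def mkIso {V : Type} [Finite V] (H : SimpleGraph V) (f : Equiv.Perm V)
    (hf : ∀ u v, H.Adj u v → H.Adj (f u) (f v)) : H ≃g H where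
  toEquiv := f
  map_rel_iff' := by
    intro u v
    constructor
    · intro h
      have hn : 0 < orderOf f := orderOf_pos f
      have key : ∀ w : V, (f ^ (orderOf f - 1)) (f w) = w := by
        intro w
        have h1 : (f ^ (orderOf f - 1) * f) w = (f ^ orderOf f) w := by
          rw [← pow_succ, Nat.sub_add_cancel hn]
        simpa [pow_orderOf_eq_one, Equiv.Perm.mul_apply] using h1
      have := adj_pow H f hf (orderOf f - 1) (f u) (f v) h
      rwa [key u, key v] at this
    · exact hf u v

/-- Let `c : V(G) → V(H)` be a loop-admitting `H`-coloring of `G` (for every edge `{u,v}` of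
`G`, either `c u = c v` or `{c u, c v} ∈ E(H)`). Then the number of colorful homomorphisms
from `H` to `G` (those with `c ∘ h` surjective) equals `|Aut(H)|` times the number of
color-prescribed homomorphisms (those with `c(h(v)) = v` for all `v`). -/
theorem stmt8 {VH VG : Type} [Fintype VH] [Fintype VG]
    (H : SimpleGraph VH) (G : SimpleGraph VG)
    (c : VG → VH)
    (hc : ∀ u v : VG, G.Adj u v → c u = c v ∨ H.Adj (c u) (c v)) :
    Nat.card {h : H →g G // Function.Surjective (fun v : VH => c (h v))} =
      Nat.card (H ≃g H) * Nat.card {h : H →g G // ∀ v : VH, c (h v) = v} := by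
  have bij : ∀ (h : H →g G), Function.Surjective (fun v : VH => c (h v)) →
      Function.Bijective (fun v : VH => c (h v)) := fun h hs =>
    (Finite.surjective_iff_bijective.mp hs)
  have pres : ∀ (h : H →g G) (hb : Function.Bijective (fun v : VH => c (h v)))
      (u v : VH), H.Adj u v →
      H.Adj ((Equiv.ofBijective _ hb) u) ((Equiv.ofBijective _ hb) v) := by
    intro h hb u v ha
    rcases hc (h u) (h v) (h.map_adj ha) with heq | hadj
    · exact absurd (hb.1 heq) ha.ne
    · exact hadj
  let toIso : (h : H →g G) → Function.Surjective (fun v : VH => c (h v)) → (H ≃g H) :=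
    fun h hs => mkIso H (Equiv.ofBijective _ (bij h hs)) (pres h (bij h hs))
  have e : {h : H →g G // Function.Surjective (fun v : VH => c (h v))} ≃
      (H ≃g H) × {h : H →g G // ∀ v : VH, c (h v) = v} :=
    { toFun := fun p =>
        ⟨toIso p.1 p.2, ⟨p.1.comp (toIso p.1 p.2).symm.toHom, by
          intro v
          exact (Equiv.ofBijective _ (bij p.1 p.2)).apply_symm_apply v⟩⟩
      invFun := fun q =>
        ⟨q.2.1.comp q.1.toHom, by
          have : (fun v : VH => c (q.2.1 (q.1 v))) = ⇑q.1 := by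
            funext v; exact q.2.2 (q.1 v)
          show Function.Surjective (fun v : VH => c (q.2.1 (q.1 v)))
          rw [this]; exact q.1.toEquiv.surjective⟩
      left_inv := by
        intro p
        apply Subtype.ext
        ext v
        simp [toIso, mkIso]
      right_inv := by
        rintro ⟨σ, h', hh'⟩
        have hs : Function.Surjective (fun v : VH => c ((h'.comp σ.toHom) v)) := by
          have heq : (fun v : VH => c ((h'.comp σ.toHom) v)) = ⇑σ := by
            funext v; exact hh' (σ v)
          rw [heq]; exact σ.toEquiv.surjective
        have hσ : toIso (h'.comp σ.toHom) hs = σ := by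
          apply RelIso.ext
          intro v
          show (Equiv.ofBijective _ (bij _ hs)) v = σ v
          exact hh' (σ v)
        refine Prod.ext hσ ?_
        apply Subtype.ext
        ext v
        show (h'.comp σ.toHom) ((toIso (h'.comp σ.toHom) hs).symm v) = h' v
        rw [hσ]
        simp
      }
  rw [Nat.card_congr e, Nat.card_prod]
end

section
/- Let F and H be finite simple graphs, let c be a homomorphism from H to F, let b ≥ 1, suppose F has at least one edge, and let M be a matching in H (a set of pairwise disjoint edges) with |M| ≥ |E(F)| · b². Then there exists a partition ρ of V(H) all of whose blocks are independent sets in H such that the quotient graph H/ρ — the graph whose vertices are the blocks of ρ, with two distinct blocks adjacent iff some edge of H joins a vertex of one block to a vertex of the other — admits a homomorphism to F and contains the complete bipartite graph K_{b,b} as a subgraph. -/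
open SimpleGraph

/-- The quotient graph `H/ρ` of a graph `H` by an equivalence relation `r` on its vertices:
vertices are the equivalence classes (blocks), and two distinct blocks are adjacent iff some
edge of `H` joins a vertex of one block to a vertex of the other. -/
def quotientGraph {V : Type} (H : SimpleGraph V) (r : Setoid V) :
    SimpleGraph (Quotient r) where
  Adj a b := a ≠ b ∧ ∃ u v : V, Quotient.mk r u = a ∧ Quotient.mk r v = b ∧ H.Adj u v
  symm := ⟨fun a b ⟨hne, u, v, hu, hv, hadj⟩ => ⟨hne.symm, v, u, hv, hu, hadj.symm⟩⟩
  loopless := ⟨fun a ⟨hne, _⟩ => hne rfl⟩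

/-- Let `c : H →g F` be a homomorphism, `b ≥ 1`, `F` with at least one edge, and `M` a
matching in `H` with `|M| ≥ |E(F)| · b²`. Then there is a partition of `V(H)` into
independent sets (an equivalence relation relating only non-adjacent vertices) whose quotient
graph admits a homomorphism to `F` and contains the complete bipartite graph `K_{b,b}` as a
subgraph (i.e. admits an injective homomorphism from `K_{b,b}`). -/
theorem stmt12 {VF VH : Type} [Fintype VF] [Fintype VH]
    (F : SimpleGraph VF) (H : SimpleGraph VH) (c : H →g F) (b : ℕ) (hb : 1 ≤ b)
    (hF : F.edgeSet.Nonempty) (M : H.Subgraph) (hM : M.IsMatching)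
    (hcard : Nat.card F.edgeSet * b ^ 2 ≤ Nat.card M.edgeSet) :
    ∃ r : Setoid VH, (∀ u v : VH, r u v → ¬ H.Adj u v) ∧
      Nonempty (quotientGraph H r →g F) ∧
      ∃ f : completeBipartiteGraph (Fin b) (Fin b) →g quotientGraph H r,
        Function.Injective f := by
  classical
  set sM : Finset (Sym2 VH) := (M.edgeSet.toFinite).toFinset with hsM
  set sF : Finset (Sym2 VF) := (F.edgeSet.toFinite).toFinset with hsF
  have hmaps : ∀ e ∈ sM, Sym2.map c e ∈ sF := by
    intro e he
    rw [hsM, Set.Finite.mem_toFinset] at he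
    rw [hsF, Set.Finite.mem_toFinset]
    exact c.map_mem_edgeSet (M.edgeSet_subset he)
  have htne : sF.Nonempty := by
    obtain ⟨e, he⟩ := hF
    exact ⟨e, by rwa [hsF, Set.Finite.mem_toFinset]⟩
  have hcard' : sF.card * b ^ 2 ≤ sM.card := by
    have h1 : Nat.card F.edgeSet = sF.card := by
      rw [Nat.card_coe_set_eq, Set.ncard_eq_toFinset_card _ (F.edgeSet.toFinite)]
    have h2 : Nat.card M.edgeSet = sM.card := by
      rw [Nat.card_coe_set_eq, Set.ncard_eq_toFinset_card _ (M.edgeSet.toFinite)]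
    rw [← h1, ← h2]; exact hcard
  obtain ⟨e₀, he₀, hfib⟩ :=
    Finset.exists_le_card_fiber_of_mul_le_card_of_maps_to hmaps htne hcard'

  -- extract the endpoints x, y of the popular edge e₀ of F
  induction e₀ using Sym2.ind with
  | _ x y =>
  have hxy : F.Adj x y := by
    rw [hsF, Set.Finite.mem_toFinset] at he₀
    exact he₀
  have hxny : x ≠ y := hxy.ne
  -- choose b² matching edges mapping onto s(x,y)
  have hcardfib : b ^ 2 ≤ Fintype.card {e // e ∈ {e ∈ sM | Sym2.map c e = s(x, y)}} := by
    rw [Fintype.card_coe]; exact hfib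
  have hle : Fintype.card (Fin b × Fin b) ≤
      Fintype.card {e // e ∈ {e ∈ sM | Sym2.map c e = s(x, y)}} := by
    simpa [pow_two] using hcardfib
  obtain ⟨emb⟩ := Function.Embedding.nonempty_of_card_le hle
  have key : ∀ k : Fin b × Fin b, ∃ uk vk : VH,
      (emb k : Sym2 VH) = s(uk, vk) ∧ c uk = x ∧ c vk = y ∧ M.Adj uk vk := by
    intro k
    obtain ⟨e, he⟩ := emb k
    simp only [Finset.mem_filter] at he
    obtain ⟨heM, hemap⟩ := he
    rw [hsM, Set.Finite.mem_toFinset] at heM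
    revert hemap heM
    induction e using Sym2.ind with
    | _ a a' =>
      intro heM hemap
      rw [Sym2.map_pair_eq, Sym2.eq_iff] at hemap
      have hadj : M.Adj a a' := heM
      rcases hemap with ⟨h1, h2⟩ | ⟨h1, h2⟩
      · exact ⟨a, a', rfl, h1, h2, hadj⟩
      · exact ⟨a', a, Sym2.eq_swap, h2, h1, hadj.symm⟩
  choose u v hpe hpx hpy hpM using key
  -- uniqueness of matching partners
  have huniq : ∀ {a b1 b2 : VH}, M.Adj a b1 → M.Adj a b2 → b1 = b2 := by
    intro a b1 b2 h1 h2
    exact (hM (M.edge_vert h1)).unique h1 h2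
  have hembinj : ∀ k k' : Fin b × Fin b, (emb k : Sym2 VH) = emb k' → k = k' := by
    intro k k' h
    exact emb.injective (Subtype.ext h)
  have huu : ∀ k k' : Fin b × Fin b, u k = u k' → k = k' := by
    intro k k' h
    have hMk' : M.Adj (u k') (v k') := hpM k'
    rw [← h] at hMk'
    have h2 : v k = v k' := huniq (hpM k) hMk'
    exact hembinj k k' (by rw [hpe k, hpe k', h, h2])
  have hvv : ∀ k k' : Fin b × Fin b, v k = v k' → k = k' := by
    intro k k' h
    have hMk' : M.Adj (v k') (u k') := (hpM k').symm
    rw [← h] at hMk'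
    have h2 : u k = u k' := huniq (hpM k).symm hMk'
    exact hembinj k k' (by rw [hpe k, hpe k', h, h2])
  have huv : ∀ k k' : Fin b × Fin b, u k ≠ v k' := by
    intro k k' h
    exact hxny (by rw [← hpx k, h, hpy k'])
  -- classifying function
  set T : VH → VH ⊕ (Fin b ⊕ Fin b) := fun w =>
    if h : ∃ k, u k = w then Sum.inr (Sum.inl (Classical.choose h).1)
    else if h : ∃ k, v k = w then Sum.inr (Sum.inr (Classical.choose h).2)
    else Sum.inl w with hT
  have hTu : ∀ k, T (u k) = Sum.inr (Sum.inl k.1) := by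
    intro k
    have h : ∃ k', u k' = u k := ⟨k, rfl⟩
    rw [hT]
    simp only [dif_pos h]
    rw [huu _ _ (Classical.choose_spec h)]
  have hTv : ∀ k, T (v k) = Sum.inr (Sum.inr k.2) := by
    intro k
    have h1 : ¬ ∃ k', u k' = v k := fun ⟨k', hk'⟩ => huv k' k hk'
    have h : ∃ k', v k' = v k := ⟨k, rfl⟩
    rw [hT]
    simp only [dif_neg h1, dif_pos h]
    rw [hvv _ _ (Classical.choose_spec h)]
  have hTcases : ∀ w, (∃ k, w = u k) ∨ (∃ k, w = v k) ∨ T w = Sum.inl w := by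
    intro w
    simp only [hT]
    split_ifs with h1 h2
    · exact Or.inl ⟨Classical.choose h1, (Classical.choose_spec h1).symm⟩
    · exact Or.inr (Or.inl ⟨Classical.choose h2, (Classical.choose_spec h2).symm⟩)
    · exact Or.inr (Or.inr rfl)
  -- mapping the blocks to F
  have hgT : ∀ w, Sum.elim c (Sum.elim (fun _ => x) (fun _ => y)) (T w) = c w := by
    intro w
    rcases hTcases w with ⟨k, rfl⟩ | ⟨k, rfl⟩ | h
    · rw [hTu k]; simp [hpx k]
    · rw [hTv k]; simp [hpy k]
    · rw [h]; simp
  refine ⟨Setoid.ker T, ?_, ?_, ?_⟩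
  · -- independence
    intro w w' hrel hadj
    have hTw : T w = T w' := hrel
    have hFadj : F.Adj (c w) (c w') := c.map_adj hadj
    rcases hTcases w with ⟨k, rfl⟩ | ⟨k, rfl⟩ | h
    · rcases hTcases w' with ⟨k', rfl⟩ | ⟨k', rfl⟩ | h'
      · rw [hpx k, hpx k'] at hFadj; exact F.loopless.irrefl x hFadj
      · rw [hTu k, hTv k'] at hTw; simp at hTw
      · rw [hTu k, h'] at hTw; simp at hTw
    · rcases hTcases w' with ⟨k', rfl⟩ | ⟨k', rfl⟩ | h'
      · rw [hTv k, hTu k'] at hTw; simp at hTw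
      · rw [hpy k, hpy k'] at hFadj; exact F.loopless.irrefl y hFadj
      · rw [hTv k, h'] at hTw; simp at hTw
    · rcases hTcases w' with ⟨k', rfl⟩ | ⟨k', rfl⟩ | h'
      · rw [h, hTu k'] at hTw; simp at hTw
      · rw [h, hTv k'] at hTw; simp at hTw
      · rw [h, h'] at hTw
        injection hTw with hww
        exact H.loopless.irrefl w (hww ▸ hadj)
  · -- homomorphism to F
    refine ⟨⟨Quotient.lift c (fun a a' (h : T a = T a') => ?_), ?_⟩⟩
    · rw [← hgT a, ← hgT a', h]
    · rintro a a' (⟨hne, w, w', rfl, rfl, hadj⟩ : a ≠ a' ∧ ∃ u v : VH, Quotient.mk _ u = a ∧ Quotient.mk _ v = a' ∧ H.Adj u v)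
      exact c.map_adj hadj
  · -- K_{b,b} embedding
    set j₀ : Fin b := ⟨0, hb⟩ with hj₀
    have hmk : ∀ w w' : VH, T w = T w' →
        Quotient.mk (Setoid.ker T) w = Quotient.mk (Setoid.ker T) w' :=
      fun w w' h => Quotient.sound h
    have hmk' : ∀ w w' : VH, Quotient.mk (Setoid.ker T) w = Quotient.mk (Setoid.ker T) w' →
        T w = T w' := fun w w' h => Quotient.exact h
    refine ⟨⟨Sum.elim (fun i => Quotient.mk (Setoid.ker T) (u (i, j₀)))
        (fun j => Quotient.mk (Setoid.ker T) (v (j₀, j))), ?_⟩, ?_⟩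
    · intro a a' haa
      have hadj : ∀ i j : Fin b,
          (quotientGraph H (Setoid.ker T)).Adj (Quotient.mk (Setoid.ker T) (u (i, j₀)))
            (Quotient.mk (Setoid.ker T) (v (j₀, j))) := by
        intro i j
        show _ ≠ _ ∧ ∃ w w' : VH, Quotient.mk _ w = _ ∧ Quotient.mk _ w' = _ ∧ H.Adj w w'
        refine ⟨?_, u (i, j), v (i, j), ?_, ?_, M.adj_sub (hpM (i, j))⟩
        · intro h
          have := hmk' _ _ h
          rw [hTu, hTv] at this
          simp at this
        · exact hmk _ _ (by rw [hTu, hTu])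
        · exact hmk _ _ (by rw [hTv, hTv])
      rcases a with i | j <;> rcases a' with i' | j'
      · simp at haa
      · exact hadj i j'
      · exact (hadj i' j).symm
      · simp at haa
    · intro a a' haa
      rcases a with i | j <;> rcases a' with i' | j' <;>
        have := hmk' _ _ haa
      · rw [hTu, hTu] at this
        simp only [Sum.inr.injEq, Sum.inl.injEq] at this
        rw [this]
      · rw [hTu, hTv] at this; simp at this
      · rw [hTv, hTu] at this; simp at this
      · rw [hTv, hTv] at this
        simp only [Sum.inr.injEq] at this
        rw [this]
end
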